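/- arXiv:2512.22458 — 4 statements merged into one kernel-verified Lean document; each statement's English description precedes it below -/
import Mathlib

section
/- Let n ≥ 1 and ν, β ∈ ℝ. Suppose f : ℍⁿ → ℝ satisfies (λ/d_H(ξ,ζ))^ν · f(Φ_{ξ,λ}^β(ζ)) ≤ f(ζ) for every ξ ∈ ℍⁿ, every ζ ∈ Σ_λ(ξ) := ℍⁿ ∖ closure(B_λ(ξ)), and every λ > 0. Then f is constant. -/
open Complex Filter Topology MeasureTheory

noncomputable section

/-- The Heisenberg group ℍⁿ as ℂⁿ × ℝ. -/
abbrev Heis (n : ℕ) := (Fin n → ℂ) × ℝ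

namespace Heis

variable {n : ℕ}

/-- Hermitian inner product ⟨z,z'⟩ = Σ_j z_j conj(z'_j). -/
def hermInner (z w : Fin n → ℂ) : ℂ := ∑ j, z j * (starRingEnd ℂ) (w j)

/-- Squared Euclidean norm |z|² = Σ_j |z_j|². -/
def nsq (z : Fin n → ℂ) : ℝ := ∑ j, Complex.normSq (z j)

/-- Group law (z,t)·(z',t') = (z+z', t+t'+2 Im⟨z,z'⟩). -/
def hmul (a b : Heis n) : Heis n :=
  (a.1 + b.1, a.2 + b.2 + 2 * (hermInner a.1 b.1).im)

/-- Group inverse: ζ⁻¹ = −ζ. -/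
def hinv (a : Heis n) : Heis n := (-a.1, -a.2)

/-- Korányi norm |(z,t)|_H = (|z|⁴ + t²)^{1/4}. -/
def korNorm (a : Heis n) : ℝ := ((nsq a.1) ^ 2 + a.2 ^ 2) ^ ((1 : ℝ)/4)

/-- Korányi distance d_H(ξ,ζ) = |ζ⁻¹·ξ|_H. -/
def dH (a b : Heis n) : ℝ := korNorm (hmul (hinv b) a)

/-- Open Korányi ball B_λ(ξ). -/
def ball (ξ : Heis n) (lam : ℝ) : Set (Heis n) := {ζ | dH ξ ζ < lam}

/-- Left translation τ_ξ. -/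
def tau (ξ ζ : Heis n) : Heis n := hmul ξ ζ

/-- Dilation δ_λ(z,t) = (λz, λ²t). -/
def dil (lam : ℝ) (a : Heis n) : Heis n := (fun j => (lam : ℂ) * a.1 j, lam ^ 2 * a.2)

/-- Rotation ρ_M(z,t) = (Mz,t). -/
def rot (M : Matrix (Fin n) (Fin n) ℂ) (a : Heis n) : Heis n := (M.mulVec a.1, a.2)

/-- Inversion ι(z,t) = (conj z, −t). -/
def iota (a : Heis n) : Heis n := (fun j => (starRingEnd ℂ) (a.1 j), -a.2)

/-- w = t + i|z|². -/
def wC (a : Heis n) : ℂ := (a.2 : ℂ) + Complex.I * ((nsq a.1 : ℝ) : ℂ)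

/-- CR inversion 𝒥(z,t) = (z/w, −t/|w|²). -/
def crInv (a : Heis n) : Heis n :=
  (fun j => a.1 j / wC a, -a.2 / Complex.normSq (wC a))

/-- Angles θ_k for the rotation matrix M_{ξ,β}. -/
def theta (ξ : Heis n) (β : ℝ) (k : Fin n) : ℝ :=
  if ξ.1 k ≠ 0 then 2 * (ξ.1 k).arg + (wC ξ + Complex.I * (β : ℂ)).arg else 0

/-- The unitary diagonal matrix M_{ξ,β} = diag(e^{iθ₁},…,e^{iθₙ}). -/
def Mmat (ξ : Heis n) (β : ℝ) : Matrix (Fin n) (Fin n) ℂ :=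
  Matrix.diagonal fun k => Complex.exp (Complex.I * ((theta ξ β k : ℝ) : ℂ))

/-- Generalized CR inversion Φ_{ξ,λ}^β = τ_ξ ∘ ρ_{M_{ξ,β}} ∘ δ_{λ²} ∘ 𝒥 ∘ ι ∘ τ_ξ⁻¹. -/
def Phi (ξ : Heis n) (lam β : ℝ) (ζ : Heis n) : Heis n :=
  tau ξ (rot (Mmat ξ β) (dil (lam ^ 2) (crInv (iota (hmul (hinv ξ) ζ)))))

/-- Direction of the vector field X_j at p. -/
def XVec (j : Fin n) (p : Heis n) : Heis n := (Pi.single j (1 : ℂ), 2 * (p.1 j).im)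

/-- Direction of the vector field Y_j at p. -/
def YVec (j : Fin n) (p : Heis n) : Heis n := (Pi.single j Complex.I, -2 * (p.1 j).re)

/-- The vector field X_j acting on functions. -/
def Xop (j : Fin n) (u : Heis n → ℝ) (p : Heis n) : ℝ := fderiv ℝ u p (XVec j p)

/-- The vector field Y_j acting on functions. -/
def Yop (j : Fin n) (u : Heis n → ℝ) (p : Heis n) : ℝ := fderiv ℝ u p (YVec j p)

/-- Sub-Laplacian Δ_H = Σ_j (X_j² + Y_j²). -/
def subLap (u : Heis n → ℝ) (p : Heis n) : ℝ :=
  ∑ j, (Xop j (Xop j u) p + Yop j (Yop j u) p)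

/-- Squared length of the horizontal gradient |∇_H u|² = Σ_j ((X_j u)² + (Y_j u)²). -/
def gradHSq (u : Heis n → ℝ) (p : Heis n) : ℝ :=
  ∑ j, ((Xop j u p) ^ 2 + (Yop j u p) ^ 2)

/-- Generalized Kelvin transform u_{ξ,λ}^β(η) = (λ/d_H(η,ξ))^{Q−2} u(Φ_{ξ,λ}^β(η)), Q−2 = 2n. -/
def kelvin (u : Heis n → ℝ) (ξ : Heis n) (lam β : ℝ) (η : Heis n) : ℝ :=
  (lam / dH η ξ) ^ (2 * n) * u (Phi ξ lam β η)

/-- The filter |ζ|_H → ∞ on ℍⁿ. -/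
def atInftyH (n : ℕ) : Filter (Heis n) := Filter.comap korNorm Filter.atTop

end Heis

section CLaux

open Heis

variable {n : ℕ}

private lemma clI_pow4 {x : ℝ} (hx : 0 ≤ x) : (x ^ ((1:ℝ)/4)) ^ (4:ℕ) = x := by
  rw [show (1:ℝ)/4 = ((4:ℕ):ℝ)⁻¹ by norm_num]
  exact Real.rpow_inv_natCast_pow hx (by norm_num)

private lemma clI_rpow4 {x : ℝ} (hx : 0 ≤ x) : (x ^ (4:ℕ)) ^ ((1:ℝ)/4) = x := by
  rw [show (1:ℝ)/4 = ((4:ℕ):ℝ)⁻¹ by norm_num]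
  exact Real.pow_rpow_inv_natCast hx (by norm_num)

private lemma clI_im_hermInner {g g' : Fin n → ℂ}
    (hj : ∀ j, (g j * (starRingEnd ℂ) (g' j)).im = 0) : (hermInner g g').im = 0 := by
  unfold hermInner
  rw [Complex.im_sum]
  exact Finset.sum_eq_zero fun j _ => hj j

private lemma clI_im_neg_self (z : Fin n → ℂ) : (hermInner (-z) z).im = 0 := by
  refine clI_im_hermInner fun j => ?_
  simp [neg_mul, Complex.mul_conj]

private lemma clI_nsq_update_zero (k : Fin n) (c : ℂ) :
    nsq (Function.update (0 : Fin n → ℂ) k c) = Complex.normSq c := by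
  unfold nsq
  rw [Finset.sum_eq_single k]
  · simp
  · intro j _ hj; simp [Function.update_of_ne hj]
  · simp

private lemma clI_korNorm_single (k : Fin n) (D : ℝ) (v : ℂ) (hv : Complex.normSq v = 1) :
    korNorm ((Function.update (0 : Fin n → ℂ) k ((D:ℂ) * v), (0:ℝ)) : Heis n) = |D| := by
  unfold korNorm
  rw [show ((Function.update (0 : Fin n → ℂ) k ((D:ℂ) * v), (0:ℝ)) : Heis n).1
      = Function.update (0 : Fin n → ℂ) k ((D:ℂ) * v) from rfl]
  rw [clI_nsq_update_zero]
  have h1 : Complex.normSq ((D:ℂ)*v) = D^2 := by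
    rw [Complex.normSq_mul, hv, Complex.normSq_ofReal]; ring
  rw [h1]
  have h2 : (D^2)^2 + ((0:ℝ))^2 = |D| ^ (4:ℕ) := by
    rw [show |D|^(4:ℕ) = (|D|^2)^2 by ring, _root_.sq_abs]; ring
  rw [show (((Function.update (0 : Fin n → ℂ) k ((D:ℂ) * v), (0:ℝ)) : Heis n).2) = (0:ℝ) from rfl, h2]
  exact clI_rpow4 (abs_nonneg D)

private lemma clI_phi_vert (β : ℝ) (z : Fin n → ℂ) (t s lam : ℝ) (hs : s ≠ 0) :
    Phi ((z, t - s) : Heis n) lam β (z, t) = (z, t - s + lam ^ (4:ℕ) / s) := by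
  have hB : hmul (hinv ((z, t - s) : Heis n)) (z, t) = ((0 : Fin n → ℂ), s) := by
    unfold hmul hinv
    refine Prod.ext ?_ ?_
    · show -z + z = 0; simp
    · show -(t - s) + t + 2 * (hermInner (-z) z).im = s
      rw [clI_im_neg_self]; ring
  unfold Phi
  rw [hB]
  have hiota : iota ((0 : Fin n → ℂ), s) = ((0 : Fin n → ℂ), -s) := by
    unfold iota
    refine Prod.ext ?_ rfl
    funext j; simp
  rw [hiota]
  have hcr : crInv ((0 : Fin n → ℂ), -s) = ((0 : Fin n → ℂ), s / (s*s)) := by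
    have hw : wC ((0 : Fin n → ℂ), -s) = ((-s : ℝ) : ℂ) := by
      unfold wC nsq; simp
    unfold crInv
    rw [hw]
    refine Prod.ext ?_ ?_
    · funext j; simp
    · show -(-s) / Complex.normSq ((-s : ℝ) : ℂ) = s / (s*s)
      rw [Complex.normSq_ofReal]; ring
  rw [hcr]
  have hdil : dil (lam^2) ((0 : Fin n → ℂ), s/(s*s)) = ((0 : Fin n → ℂ), (lam^2)^2 * (s/(s*s))) := by
    unfold dil
    refine Prod.ext ?_ rfl
    funext j; simp
  rw [hdil]
  have hrot : rot (Mmat ((z, t-s) : Heis n) β) ((0 : Fin n → ℂ), (lam^2)^2 * (s/(s*s)))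
      = ((0:Fin n → ℂ), (lam^2)^2*(s/(s*s))) := by
    unfold rot
    refine Prod.ext ?_ rfl
    show (Mmat ((z, t-s) : Heis n) β).mulVec 0 = 0
    exact Matrix.mulVec_zero _
  rw [hrot]
  unfold tau hmul
  refine Prod.ext ?_ ?_
  · show z + 0 = z; simp
  · show (t - s) + (lam^2)^2 * (s/(s*s)) + 2 * (hermInner z (0 : Fin n → ℂ)).im = t - s + lam^(4:ℕ)/s
    have h0 : hermInner z (0 : Fin n → ℂ) = 0 := by unfold hermInner; simp
    rw [h0, Complex.zero_im]
    field_simp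
    ring

private lemma clI_dH_vert (z : Fin n → ℂ) (t s : ℝ) :
    dH ((z, t - s) : Heis n) (z, t) = (s^2) ^ ((1:ℝ)/4) := by
  unfold dH
  have hB : hmul (hinv ((z, t) : Heis n)) (z, t - s) = ((0 : Fin n → ℂ), -s) := by
    unfold hmul hinv
    refine Prod.ext ?_ ?_
    · show -z + z = 0; simp
    · show -t + (t - s) + 2 * (hermInner (-z) z).im = -s
      rw [clI_im_neg_self]; ring
  rw [hB]
  unfold korNorm nsq
  norm_num

private lemma clI_im_aligned (z : Fin n → ℂ) (k : Fin n) (v : ℂ) (a b : ℝ)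
    (hzk : z k = (a:ℂ) * v) :
    (hermInner (-(Function.update z k ((b:ℂ)*v))) z).im = 0 := by
  refine clI_im_hermInner fun j => ?_
  show ((-(Function.update z k ((b:ℂ)*v))) j * (starRingEnd ℂ) (z j)).im = 0
  rw [Pi.neg_apply]
  by_cases hj : j = k
  · subst hj
    rw [Function.update_self, hzk]
    have h1 : -((b:ℂ)*v) * (starRingEnd ℂ) ((a:ℂ)*v)
        = -((b:ℂ) * (a:ℂ) * ((Complex.normSq v : ℝ) : ℂ)) := by
      rw [map_mul, Complex.conj_ofReal, ← Complex.mul_conj]; ring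
    rw [h1]
    simp
  · rw [Function.update_of_ne hj]
    simp [neg_mul, Complex.mul_conj]

private lemma clI_im_aligned' (z : Fin n → ℂ) (k : Fin n) (v : ℂ) (a b : ℝ)
    (hzk : z k = (a:ℂ) * v) :
    (hermInner (-z) (Function.update z k ((b:ℂ)*v))).im = 0 := by
  refine clI_im_hermInner fun j => ?_
  show ((-z) j * (starRingEnd ℂ) (Function.update z k ((b:ℂ)*v) j)).im = 0
  rw [Pi.neg_apply]
  by_cases hj : j = k
  · subst hj
    rw [Function.update_self, hzk]
    have h1 : -((a:ℂ)*v) * (starRingEnd ℂ) ((b:ℂ)*v)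
        = -((a:ℂ) * (b:ℂ) * ((Complex.normSq v : ℝ) : ℂ)) := by
      rw [map_mul, Complex.conj_ofReal, ← Complex.mul_conj]; ring
    rw [h1]
    simp
  · rw [Function.update_of_ne hj]
    simp [neg_mul, Complex.mul_conj]

private lemma clI_dH_horiz (z : Fin n → ℂ) (k : Fin n) (v : ℂ) (hv : Complex.normSq v = 1)
    (ρ r : ℝ) (hzk : z k = (ρ:ℂ) * v) :
    dH ((Function.update z k ((r:ℂ)*v), (0:ℝ)) : Heis n) (z, (0:ℝ)) = |ρ - r| := by
  unfold dH
  have hB : hmul (hinv ((z, (0:ℝ)) : Heis n)) (Function.update z k ((r:ℂ)*v), (0:ℝ))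
      = ((Function.update (0 : Fin n → ℂ) k ((((r - ρ:ℝ)):ℂ)*v), (0:ℝ)) : Heis n) := by
    unfold hmul hinv
    refine Prod.ext ?_ ?_
    · show -z + Function.update z k ((r:ℂ)*v) = Function.update (0 : Fin n → ℂ) k ((((r - ρ:ℝ)):ℂ)*v)
      funext j
      by_cases hj : j = k
      · subst hj
        simp only [Pi.add_apply, Pi.neg_apply, Function.update_self, hzk]
        push_cast; ring
      · simp [Function.update_of_ne hj]
    · show -(0:ℝ) + 0 + 2 * (hermInner (-z) (Function.update z k ((r:ℂ)*v))).im = 0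
      rw [clI_im_aligned' z k v ρ r hzk]; ring
  rw [hB, clI_korNorm_single k (r - ρ) v hv, abs_sub_comm]

private lemma clI_phi_horiz (β : ℝ) (z : Fin n → ℂ) (k : Fin n) (v : ℂ)
    (hv : Complex.normSq v = 1) (ρ r lam : ℝ) (hzk : z k = (ρ:ℂ) * v) (hr : r ≠ 0)
    (hD : ρ - r ≠ 0) (hc : 0 < nsq (Function.update z k ((r:ℂ)*v)) + β) :
    (Phi ((Function.update z k ((r:ℂ)*v), (0:ℝ)) : Heis n) lam β (z, (0:ℝ))).1
      = Function.update z k ((((r + lam^2/(ρ - r) : ℝ)):ℂ) * v) := by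
  have hv0 : v ≠ 0 := by
    intro h; rw [h] at hv; simp at hv
  have hvc : v * (starRingEnd ℂ) v = 1 := by
    rw [Complex.mul_conj, hv]; norm_num
  have hcv : (starRingEnd ℂ) v = v⁻¹ := ((inv_eq_of_mul_eq_one_right hvc).symm)
  set z' := Function.update z k ((r:ℂ)*v) with hz'def
  have hB : hmul (hinv ((z', (0:ℝ)) : Heis n)) (z, (0:ℝ))
      = ((Function.update (0 : Fin n → ℂ) k ((((ρ - r:ℝ)):ℂ)*v), (0:ℝ)) : Heis n) := by
    unfold hmul hinv
    refine Prod.ext ?_ ?_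
    · show -z' + z = Function.update (0 : Fin n → ℂ) k ((((ρ - r:ℝ)):ℂ)*v)
      funext j
      by_cases hj : j = k
      · subst hj
        simp only [Pi.add_apply, Pi.neg_apply, hz'def, Function.update_self, hzk]
        push_cast; ring
      · simp [hz'def, Function.update_of_ne hj]
    · show -(0:ℝ) + 0 + 2 * (hermInner (-z') z).im = 0
      rw [hz'def, clI_im_aligned z k v ρ r hzk]; ring
  unfold Phi
  rw [hB]
  have hiota : iota ((Function.update (0 : Fin n → ℂ) k ((((ρ - r:ℝ)):ℂ)*v), (0:ℝ)) : Heis n)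
      = ((Function.update (0 : Fin n → ℂ) k ((((ρ - r:ℝ)):ℂ) * (starRingEnd ℂ) v), (0:ℝ)) : Heis n) := by
    unfold iota
    refine Prod.ext ?_ (by norm_num)
    funext j
    by_cases hj : j = k
    · subst hj; simp [map_mul, Complex.conj_ofReal]
    · simp [Function.update_of_ne hj]
  rw [hiota]
  have hnsqB : nsq (Function.update (0:Fin n→ℂ) k ((((ρ-r):ℝ):ℂ) * (starRingEnd ℂ) v)) = (ρ - r)^2 := by
    rw [clI_nsq_update_zero]
    rw [Complex.normSq_mul, Complex.normSq_conj, hv, Complex.normSq_ofReal]; ring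
  have hwB : wC ((Function.update (0:Fin n→ℂ) k ((((ρ-r):ℝ):ℂ) * (starRingEnd ℂ) v), (0:ℝ)) : Heis n)
      = Complex.I * (((ρ-r)^2 : ℝ) : ℂ) := by
    unfold wC
    rw [show ((Function.update (0:Fin n→ℂ) k ((((ρ-r):ℝ):ℂ) * (starRingEnd ℂ) v), (0:ℝ)) : Heis n).1
        = Function.update (0:Fin n→ℂ) k ((((ρ-r):ℝ):ℂ) * (starRingEnd ℂ) v) from rfl, hnsqB]
    norm_num
  have hcr : crInv ((Function.update (0:Fin n→ℂ) k ((((ρ-r):ℝ):ℂ) * (starRingEnd ℂ) v), (0:ℝ)) : Heis n)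
      = ((Function.update (0:Fin n→ℂ) k (((((ρ-r):ℝ):ℂ) * (starRingEnd ℂ) v) / (Complex.I * (((ρ-r)^2 : ℝ) : ℂ))), (0:ℝ)) : Heis n) := by
    unfold crInv
    rw [hwB]
    refine Prod.ext ?_ (by norm_num)
    funext j
    by_cases hj : j = k
    · subst hj; simp
    · simp [Function.update_of_ne hj]
  rw [hcr]
  have hdil : dil (lam^2) ((Function.update (0:Fin n→ℂ) k (((((ρ-r):ℝ):ℂ) * (starRingEnd ℂ) v) / (Complex.I * (((ρ-r)^2 : ℝ) : ℂ))), (0:ℝ)) : Heis n)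
      = ((Function.update (0:Fin n→ℂ) k ((((lam^2:ℝ)):ℂ) * ((((((ρ-r):ℝ)):ℂ) * (starRingEnd ℂ) v) / (Complex.I * (((ρ-r)^2 : ℝ) : ℂ)))), ((lam^2)^2 * 0 : ℝ)) : Heis n) := by
    unfold dil
    refine Prod.ext ?_ rfl
    funext j
    by_cases hj : j = k
    · subst hj; simp
    · simp [Function.update_of_ne hj]
  rw [hdil]
  -- the rotation angle at k
  have hzk' : (z' , (0:ℝ)).1 k = (r:ℂ) * v := by simp [hz'def]
  have hne : ((z', (0:ℝ)) : Heis n).1 k ≠ 0 := by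
    rw [hzk']
    exact mul_ne_zero (Complex.ofReal_ne_zero.2 hr) hv0
  have harg : (wC ((z', (0:ℝ)) : Heis n) + Complex.I * (β:ℂ)).arg = Real.pi/2 := by
    have hwx : wC ((z', (0:ℝ)) : Heis n) + Complex.I * (β:ℂ)
        = ((nsq z' + β : ℝ) : ℂ) * Complex.I := by
      unfold wC
      push_cast
      ring
    rw [hwx, Complex.arg_real_mul _ hc, Complex.arg_I]
  have habsv : ‖v‖ = 1 := by
    rw [Complex.norm_def, hv, Real.sqrt_one]
  have hexp : Complex.exp (Complex.I * ((theta ((z', (0:ℝ)) : Heis n) β k : ℝ) : ℂ)) = v^2 * Complex.I := by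
    unfold theta
    rw [if_pos hne, harg, hzk']
    have hsplit : (Complex.I * ((2 * ((r:ℂ)*v).arg + Real.pi/2 : ℝ) : ℂ))
        = ((((r:ℂ)*v).arg : ℝ) : ℂ) * Complex.I + (((((r:ℂ)*v).arg : ℝ) : ℂ) * Complex.I + ((Real.pi/2 : ℝ) : ℂ) * Complex.I) := by
      push_cast; ring
    rw [hsplit, Complex.exp_add, Complex.exp_add]
    have habs0 : ((‖(r:ℂ)*v‖ : ℝ) : ℂ) ≠ 0 := by
      simp [norm_mul, habsv, hr]
    have he1 : Complex.exp (((((r:ℂ)*v).arg : ℝ) : ℂ) * Complex.I) = ((r:ℂ)*v) / ((‖(r:ℂ)*v‖ : ℝ) : ℂ) := by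
      rw [eq_div_iff habs0, mul_comm]
      exact Complex.norm_mul_exp_arg_mul_I _
    have he2 : Complex.exp (((Real.pi/2 : ℝ) : ℂ) * Complex.I) = Complex.I := by
      rw [Complex.exp_mul_I]; push_cast; simp
    rw [he1, he2]
    have habsrv : ‖(r:ℂ)*v‖ = |r| := by
      rw [norm_mul, habsv, mul_one]; simp
    rw [habsrv]
    have h2 : ((|r| : ℝ) : ℂ) * ((|r| : ℝ) : ℂ) = (r:ℂ) * (r:ℂ) := by
      norm_cast
      exact abs_mul_abs_self r
    have habsr0 : ((|r| : ℝ) : ℂ) ≠ 0 := by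
      simp [abs_eq_zero, hr]
    field_simp
    rw [sq, sq, h2]
  have hrot : rot (Mmat ((z', (0:ℝ)) : Heis n) β) ((Function.update (0:Fin n→ℂ) k ((((lam^2:ℝ)):ℂ) * ((((((ρ-r):ℝ)):ℂ) * (starRingEnd ℂ) v) / (Complex.I * (((ρ-r)^2 : ℝ) : ℂ)))), ((lam^2)^2 * 0 : ℝ)) : Heis n)
      = ((Function.update (0:Fin n→ℂ) k ((((lam^2/(ρ-r) : ℝ)):ℂ) * v), ((lam^2)^2 * 0 : ℝ)) : Heis n) := by
    unfold rot Mmat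
    refine Prod.ext ?_ rfl
    funext j
    show (Matrix.diagonal _).mulVec _ j = _
    rw [Matrix.mulVec_diagonal]
    dsimp only
    by_cases hj : j = k
    · subst hj
      rw [Function.update_self, Function.update_self, hexp, hcv]
      have hDc : ((ρ:ℂ) - (r:ℂ)) ≠ 0 := by
        have h0 := Complex.ofReal_ne_zero.2 hD
        push_cast at h0
        exact h0
      push_cast
      field_simp [Complex.I_ne_zero, hv0, hDc]
    · simp [Function.update_of_ne hj]
  rw [hrot]
  unfold tau hmul
  show z' + Function.update (0:Fin n→ℂ) k ((((lam^2/(ρ-r) : ℝ)):ℂ) * v) = _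
  funext j
  by_cases hj : j = k
  · subst hj
    simp only [Pi.add_apply, hz'def, Function.update_self]
    push_cast; ring
  · simp [hz'def, Function.update_of_ne hj]

private lemma clI_not_mem_closure (ξ : Heis n) (lam : ℝ) (hlam : 0 < lam) (ζ : Heis n)
    (hd : lam < dH ξ ζ) : ζ ∉ closure (ball ξ lam) := by
  classical
  set F : Heis n → ℝ := fun η =>
    (nsq (hmul (hinv η) ξ).1)^2 + ((hmul (hinv η) ξ).2)^2 with hF
  have hdHF : ∀ η : Heis n, dH ξ η = (F η) ^ ((1:ℝ)/4) := fun η => rfl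
  have hF0 : ∀ η, 0 ≤ F η := fun η => by positivity
  have hFcont : Continuous F := by
    have h1 : Continuous fun η : Heis n => (hmul (hinv η) ξ).1 := by
      unfold hmul hinv
      exact (continuous_fst.neg).add continuous_const
    have h2 : Continuous fun η : Heis n => (hmul (hinv η) ξ).2 := by
      unfold hmul hinv hermInner
      dsimp only
      refine ((continuous_snd.neg.add continuous_const).add ?_)
      refine (Continuous.mul continuous_const ?_)
      refine Complex.continuous_im.comp ?_
      refine continuous_finset_sum _ fun j _ => ?_
      exact (((continuous_apply j).comp continuous_fst).neg).mul continuous_const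
    have h3 : Continuous fun η : Heis n => nsq (hmul (hinv η) ξ).1 := by
      unfold nsq
      refine continuous_finset_sum _ fun j _ => ?_
      exact Complex.continuous_normSq.comp ((continuous_apply j).comp h1)
    rw [hF]
    exact ((h3.pow 2).add (h2.pow 2))
  intro hmem
  have hsub : ball ξ lam ⊆ {η : Heis n | F η ≤ lam^(4:ℕ)} := by
    intro η hη
    have hη' : dH ξ η < lam := hη
    rw [hdHF] at hη'
    have : ((F η) ^ ((1:ℝ)/4))^(4:ℕ) < lam^(4:ℕ) := by
      refine pow_lt_pow_left₀ hη' ?_ (by norm_num)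
      exact Real.rpow_nonneg (hF0 η) _
    rw [clI_pow4 (hF0 η)] at this
    exact this.le
  have hclosed : IsClosed {η : Heis n | F η ≤ lam^(4:ℕ)} :=
    isClosed_le hFcont continuous_const
  have hFζ : F ζ ≤ lam^(4:ℕ) := closure_minimal hsub hclosed hmem
  have : dH ξ ζ ≤ lam := by
    rw [hdHF]
    calc (F ζ) ^ ((1:ℝ)/4) ≤ (lam^(4:ℕ)) ^ ((1:ℝ)/4) :=
          Real.rpow_le_rpow (hF0 ζ) hFζ (by norm_num)
      _ = lam := clI_rpow4 hlam.le
  linarith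

end CLaux

set_option maxHeartbeats 1000000

open Heis
/-- Calculus Lemma I of Li–Nirenberg–Zhu type. -/
theorem calculus_lemma_I (n : ℕ) (hn : 1 ≤ n) (ν β : ℝ) (f : Heis n → ℝ)
    (h : ∀ ξ : Heis n, ∀ lam : ℝ, 0 < lam → ∀ ζ ∉ closure (ball ξ lam),
      (lam / dH ξ ζ) ^ ν * f (Phi ξ lam β ζ) ≤ f ζ) :
    ∃ c : ℝ, ∀ ζ : Heis n, f ζ = c := by
  classical
  have hlim : ∀ (a b : ℝ) (κ : ℕ → ℝ), Filter.Tendsto κ Filter.atTop (nhds 1) →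
      (∀ᶠ m in Filter.atTop, κ m * a ≤ b) → a ≤ b := by
    intro a b κ hκ hev
    have h1 : Filter.Tendsto (fun m => κ m * a) Filter.atTop (nhds (1 * a)) := hκ.mul_const a
    rw [one_mul] at h1
    exact le_of_tendsto h1 hev
  have hten1 : Filter.Tendsto (fun m : ℕ => ((((m:ℝ)-1)/m) ^ ((1:ℝ)/4)) ^ ν)
      Filter.atTop (nhds 1) := by
    have h0 : Filter.Tendsto (fun m : ℕ => ((m:ℝ)-1)/m) Filter.atTop (nhds 1) := by
      have h1 : Filter.Tendsto (fun m : ℕ => (1:ℝ) - 1/(m:ℝ)) Filter.atTop (nhds (1 - 0)) :=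
        tendsto_const_nhds.sub (tendsto_const_div_atTop_nhds_zero_nat 1)
      rw [sub_zero] at h1
      refine h1.congr' ?_
      filter_upwards [Filter.eventually_ge_atTop 1] with m hm
      have hm0 : (m:ℝ) ≠ 0 := Nat.cast_ne_zero.2 (by omega)
      field_simp
    have hc4 : Filter.Tendsto (fun x : ℝ => x ^ ((1:ℝ)/4)) (nhds 1) (nhds 1) := by
      have := (Real.continuousAt_rpow_const 1 ((1:ℝ)/4) (Or.inl one_ne_zero)).tendsto
      rwa [Real.one_rpow] at this
    have hcw : Filter.Tendsto (fun x : ℝ => x ^ ν) (nhds 1) (nhds 1) := by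
      have := (Real.continuousAt_rpow_const 1 ν (Or.inl one_ne_zero)).tendsto
      rwa [Real.one_rpow] at this
    exact hcw.comp (hc4.comp h0)
  -- Step 1 : invariance in the vertical direction
  have t_le : ∀ (z : Fin n → ℂ) (t u : ℝ), f (z, t + u) ≤ f (z, t) := by
    intro z t u
    rcases eq_or_ne u 0 with hu | hu
    · simp [hu]
    · refine hlim _ _ _ hten1 ?_
      filter_upwards [Filter.eventually_ge_atTop 2] with m hm
      have hm' : (2:ℝ) ≤ (m:ℝ) := by exact_mod_cast hm
      have hm0 : (m:ℝ) ≠ 0 := by linarith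
      set s : ℝ := -(u * m) with hsdef
      have hs : s ≠ 0 := by
        rw [hsdef]
        exact neg_ne_zero.2 (mul_ne_zero hu hm0)
      set A : ℝ := u^2 * ((m:ℝ) * ((m:ℝ)-1)) with hAdef
      have hu2 : 0 < u^2 := by positivity
      have hA : 0 < A := by
        have hmm : 0 < (m:ℝ) * ((m:ℝ)-1) := by nlinarith
        exact mul_pos hu2 hmm
      set lam : ℝ := A ^ ((1:ℝ)/4) with hlamdef
      have hlam : 0 < lam := Real.rpow_pos_of_pos hA _
      have hdH : dH ((z, t - s) : Heis n) (z, t) = (u^2*(m:ℝ)^2) ^ ((1:ℝ)/4) := by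
        rw [clI_dH_vert]
        congr 1
        rw [hsdef]; ring
      have hlt : lam < dH ((z, t - s) : Heis n) (z, t) := by
        rw [hdH, hlamdef]
        refine Real.rpow_lt_rpow hA.le ?_ (by norm_num)
        rw [hAdef]
        nlinarith [mul_pos hu2 (show (0:ℝ) < (m:ℝ) by linarith)]
      have hius := h (z, t - s) lam hlam (z, t) (clI_not_mem_closure _ _ hlam _ hlt)
      rw [clI_phi_vert β z t s lam hs] at hius
      have hl4 : lam ^ (4:ℕ) = A := clI_pow4 hA.le
      have hval : t - s + lam ^ (4:ℕ) / s = t + u := by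
        rw [hl4, hAdef, hsdef]
        field_simp
        ring
      rw [hval, hdH] at hius
      have hcoef : lam / (u^2*(m:ℝ)^2) ^ ((1:ℝ)/4) = (((m:ℝ)-1)/m) ^ ((1:ℝ)/4) := by
        rw [hlamdef, ← Real.div_rpow hA.le (by positivity)]
        congr 1
        rw [hAdef]
        field_simp
      rw [hcoef] at hius
      exact hius
  have t_eq : ∀ (z : Fin n → ℂ) (t t' : ℝ), f (z, t') = f (z, t) := by
    intro z t t'
    have h1 := t_le z t (t' - t)
    have h2 := t_le z t' (t - t')
    rw [show t + (t' - t) = t' by ring] at h1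
    rw [show t' + (t - t') = t by ring] at h2
    exact le_antisymm h1 h2
  have hten2 : ∀ (e : ℝ), Filter.Tendsto (fun m : ℕ => Real.sqrt (1 - e/(m:ℝ)) ^ ν)
      Filter.atTop (nhds 1) := by
    intro e
    have h0 : Filter.Tendsto (fun m : ℕ => (1:ℝ) - e/(m:ℝ)) Filter.atTop (nhds 1) := by
      have h1 : Filter.Tendsto (fun m : ℕ => (1:ℝ) - e/(m:ℝ)) Filter.atTop (nhds (1 - 0)) :=
        tendsto_const_nhds.sub (tendsto_const_div_atTop_nhds_zero_nat e)
      rwa [sub_zero] at h1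
    have hsq : Filter.Tendsto (fun x : ℝ => Real.sqrt x) (nhds 1) (nhds 1) := by
      have := Real.continuous_sqrt.tendsto 1
      rwa [Real.sqrt_one] at this
    have hcw : Filter.Tendsto (fun x : ℝ => x ^ ν) (nhds 1) (nhds 1) := by
      have := (Real.continuousAt_rpow_const 1 ν (Or.inl one_ne_zero)).tendsto
      rwa [Real.one_rpow] at this
    exact hcw.comp (hsq.comp h0)
  -- Step 2 : one–coordinate moves along rays
  have z_le : ∀ (z : Fin n → ℂ) (k : Fin n) (v : ℂ), Complex.normSq v = 1 →
      ∀ (ρ σ : ℝ), z k = (ρ:ℂ) * v →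
      f (Function.update z k ((σ:ℂ) * v), 0) ≤ f (z, 0) := by
    intro z k v hv ρ σ hzk
    rcases eq_or_ne σ ρ with hσ | hσ
    · subst hσ
      rw [← hzk, Function.update_eq_self]
    · set e : ℝ := |σ - ρ| with hedef
      have he : 0 < e := abs_pos.2 (sub_ne_zero.2 hσ)
      set s₀ : ℝ := (σ - ρ)/e with hs₀def
      have hs₀abs : |s₀| = 1 := by
        rw [hs₀def, abs_div, ← hedef, abs_of_pos he, div_self he.ne']
      have hs₀sq : s₀ * s₀ = 1 := by
        have h1 := abs_mul_abs_self s₀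
        rw [hs₀abs] at h1
        linarith
      have hs₀e : s₀ * e = σ - ρ := by
        rw [hs₀def]; field_simp
      have hs₀ne : s₀ ≠ 0 := by
        intro h0; rw [h0] at hs₀abs; simp at hs₀abs
      refine hlim _ _ _ (hten2 e) ?_
      filter_upwards [Filter.eventually_gt_atTop (⌈e + |ρ| + |β| + 1⌉₊)] with m hm
      set w : ℝ := (m:ℝ) with hwdef
      have hw : e + |ρ| + |β| + 1 < w := by
        calc e + |ρ| + |β| + 1 ≤ (⌈e + |ρ| + |β| + 1⌉₊ : ℝ) := Nat.le_ceil _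
          _ < (m:ℝ) := by exact_mod_cast hm
      have hwpos : 0 < w := by
        have := abs_nonneg ρ; have := abs_nonneg β; linarith
      set r : ℝ := ρ + s₀ * w with hrdef
      have hρr : ρ - r = -(s₀ * w) := by rw [hrdef]; ring
      have habsD : |ρ - r| = w := by
        rw [hρr, abs_neg, abs_mul, hs₀abs, one_mul, abs_of_pos hwpos]
      have hDne : ρ - r ≠ 0 := by
        rw [hρr, neg_ne_zero]
        exact mul_ne_zero hs₀ne hwpos.ne'
      have hrabs : w - |ρ| ≤ |r| := by
        have h1 : |s₀ * w| ≤ |r| + |ρ| := by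
          calc |s₀ * w| = |r - ρ| := by rw [hrdef]; congr 1; ring
            _ ≤ |r| + |ρ| := abs_sub r ρ
        rw [abs_mul, hs₀abs, one_mul, abs_of_pos hwpos] at h1
        linarith
      have hrne : r ≠ 0 := by
        intro h0
        rw [h0] at hrabs
        simp at hrabs
        have := abs_nonneg β
        linarith
      have hcpos : 0 < nsq (Function.update z k ((r:ℂ)*v)) + β := by
        have h1 : Complex.normSq ((r:ℂ)*v) ≤ nsq (Function.update z k ((r:ℂ)*v)) := by
          unfold nsq
          have h2 := Finset.single_le_sum
            (f := fun j => Complex.normSq (Function.update z k ((r:ℂ)*v) j))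
            (fun j _ => Complex.normSq_nonneg _) (Finset.mem_univ k)
          simpa using h2
        have h2 : Complex.normSq ((r:ℂ)*v) = r^2 := by
          rw [Complex.normSq_mul, hv, Complex.normSq_ofReal]; ring
        have h4 : 0 ≤ w - |ρ| := by
          have := abs_nonneg β; linarith
        have h3 : (w - |ρ|)^2 ≤ r^2 := by
          calc (w - |ρ|)^2 ≤ |r|^2 := by nlinarith
            _ = r^2 := _root_.sq_abs r
        have h5 : |β| < (w - |ρ|)^2 := by nlinarith [abs_nonneg β]
        nlinarith [neg_abs_le β]
      set x : ℝ := 1 - e/w with hxdef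
      have hxpos : 0 < x := by
        rw [hxdef]
        have h1 : e/w < 1 := by
          rw [div_lt_one hwpos]
          have := abs_nonneg ρ; have := abs_nonneg β; linarith
        linarith
      have hxlt : x < 1 := by
        rw [hxdef]
        have h1 : 0 < e/w := div_pos he hwpos
        linarith
      set lam : ℝ := w * Real.sqrt x with hlamdef
      have hsx : 0 < Real.sqrt x := Real.sqrt_pos.2 hxpos
      have hlampos : 0 < lam := mul_pos hwpos hsx
      have hsqlt : Real.sqrt x < 1 := by
        have h1 := Real.sqrt_lt_sqrt hxpos.le hxlt
        rwa [Real.sqrt_one] at h1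
      have hlamsq : lam^2 = w^2 * x := by
        rw [hlamdef, mul_pow, Real.sq_sqrt hxpos.le]
      have hdH : dH ((Function.update z k ((r:ℂ)*v), (0:ℝ)) : Heis n) (z, 0) = w := by
        rw [clI_dH_horiz z k v hv ρ r hzk, habsD]
      have hlt : lam < dH ((Function.update z k ((r:ℂ)*v), (0:ℝ)) : Heis n) (z, 0) := by
        rw [hdH]
        calc lam = w * Real.sqrt x := rfl
          _ < w * 1 := mul_lt_mul_of_pos_left hsqlt hwpos
          _ = w := mul_one w
      have hius := h (Function.update z k ((r:ℂ)*v), (0:ℝ)) lam hlampos (z, 0)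
        (clI_not_mem_closure _ _ hlampos _ hlt)
      have hlam2 : lam^2 = (σ - r) * (ρ - r) := by
        have hex : w^2 * x = w*w - e*w := by
          rw [hxdef]; field_simp
        rw [hlamsq, hex, hρr, hrdef]
        linear_combination (e*w - w*w) * hs₀sq + (-(s₀*w)) * hs₀e
      have hval : r + lam^2/(ρ - r) = σ := by
        rw [hlam2, mul_div_assoc, div_self hDne, mul_one]
        ring
      have hphi1 := clI_phi_horiz β z k v hv ρ r lam hzk hrne hDne hcpos
      have hfeq : f (Phi ((Function.update z k ((r:ℂ)*v), (0:ℝ)) : Heis n) lam β (z, 0))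
          = f (Function.update z k ((σ:ℂ) * v), 0) := by
        have hP : Phi ((Function.update z k ((r:ℂ)*v), (0:ℝ)) : Heis n) lam β (z, 0)
            = (Function.update z k ((σ:ℂ) * v),
               (Phi ((Function.update z k ((r:ℂ)*v), (0:ℝ)) : Heis n) lam β (z, 0)).2) := by
          refine Prod.ext ?_ rfl
          rw [hphi1]
          rw [show ((r + lam^2/(ρ - r) : ℝ) : ℂ) = ((σ:ℝ):ℂ) by rw [hval]]
        rw [hP]
        exact t_eq _ 0 _
      rw [hfeq, hdH] at hius
      have hcoef : lam / w = Real.sqrt x := by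
        rw [hlamdef, mul_comm, mul_div_assoc, div_self hwpos.ne', mul_one]
      rw [hcoef] at hius
      exact hius
  -- collapsing one coordinate to 0
  have z_eq0 : ∀ (z : Fin n → ℂ) (k : Fin n) (c : ℂ),
      f (Function.update z k c, 0) = f (Function.update z k 0, 0) := by
    intro z k c
    rcases eq_or_ne c 0 with hc | hc
    · rw [hc]
    · set av : ℝ := ‖c‖ with havdef
      have hav : 0 < av := by
        rw [havdef]; exact norm_pos_iff.2 hc
      set v : ℂ := ((av:ℝ):ℂ)⁻¹ * c with hvdef
      have havne : ((av:ℝ):ℂ) ≠ 0 := by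
        exact_mod_cast hav.ne'
      have hvns : Complex.normSq v = 1 := by
        rw [hvdef, Complex.normSq_mul, Complex.normSq_inv, Complex.normSq_ofReal, havdef,
          Complex.normSq_eq_norm_sq]
        field_simp
      have hcv : ((av:ℝ):ℂ) * v = c := by
        rw [hvdef, ← mul_assoc, mul_inv_cancel₀ havne, one_mul]
      have h1 : f (Function.update (Function.update z k c) k (((0:ℝ):ℂ) * v), 0)
          ≤ f (Function.update z k c, 0) := by
        refine z_le _ k v hvns av 0 ?_
        rw [Function.update_self, ← hcv]
      have h2 : f (Function.update (Function.update z k 0) k (((av:ℝ):ℂ) * v), 0)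
          ≤ f (Function.update z k 0, 0) := by
        refine z_le _ k v hvns 0 av ?_
        rw [Function.update_self]; norm_num
      rw [Function.update_idem] at h1 h2
      rw [hcv] at h2
      rw [show (((0:ℝ):ℂ) * v) = (0:ℂ) by norm_num] at h1
      exact le_antisymm h2 h1
  have hzero : ∀ z : Fin n → ℂ, f (z, 0) = f ((fun _ => 0), 0) := by
    have hind : ∀ (s : Finset (Fin n)) (z : Fin n → ℂ), (∀ j, j ∉ s → z j = 0) →
        f (z, 0) = f ((fun _ => 0), 0) := by
      intro s
      induction s using Finset.induction_on with
      | empty =>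
        intro z hz
        have : z = (fun _ => 0) := funext fun j => hz j (Finset.notMem_empty j)
        rw [this]
      | @insert a s ha IH =>
        intro z hz
        have h1 : f (z, 0) = f (Function.update z a 0, 0) := by
          have h2 := z_eq0 z a (z a)
          rwa [Function.update_eq_self] at h2
        rw [h1]
        refine IH _ fun j hj => ?_
        by_cases hja : j = a
        · subst hja; rw [Function.update_self]
        · rw [Function.update_of_ne hja]
          refine hz j ?_
          simp [Finset.mem_insert, hja, hj]
    intro z
    exact hind Finset.univ z (fun j hj => absurd (Finset.mem_univ j) hj)
  refine ⟨f ((fun _ => 0), 0), fun ζ => ?_⟩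
  calc f ζ = f (ζ.1, ζ.2) := rfl
    _ = f (ζ.1, 0) := t_eq ζ.1 0 ζ.2
    _ = f ((fun _ => 0), 0) := hzero ζ.1
end
end

section
/- Let n ≥ 1 and ν > 0. Suppose a nonnegative continuous function f : ℍⁿ → ℝ attains its maximum at the origin, the limit α := lim_{|ζ|_H→∞} |ζ|_H^ν f(ζ) exists and is positive, β := α^{2/ν} f(0)^{−2/ν}, and for every ξ ∈ ℍⁿ there exists λ(ξ) > 0 such that (λ(ξ)/d_H(ξ,ζ))^ν · f(Φ_{ξ,λ(ξ)}^β(ζ)) = f(ζ) for all ζ ∈ ℍⁿ ∖ {ξ}. Then f(z,t) = α · |t + i|z|² + iβ|^{−ν/2} for all (z,t) ∈ ℍⁿ. -/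
open Complex Filter Topology MeasureTheory

noncomputable section

open Heis

namespace CalcAux

variable {n : ℕ}

lemma hermInner_conj (z w : Fin n → ℂ) :
    (starRingEnd ℂ) (hermInner z w) = hermInner w z := by
  simp only [hermInner, map_sum, map_mul, Complex.conj_conj]
  exact Finset.sum_congr rfl fun j _ => mul_comm _ _

lemma hermInner_self_im (z : Fin n → ℂ) : (hermInner z z).im = 0 := by
  simp [hermInner, Complex.mul_conj]

@[simp] lemma nsq_nonneg (z : Fin n → ℂ) : 0 ≤ nsq z :=
  Finset.sum_nonneg fun j _ => Complex.normSq_nonneg _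

@[simp] lemma wC_re (a : Heis n) : (wC a).re = a.2 := by simp [wC]

@[simp] lemma wC_im (a : Heis n) : (wC a).im = nsq a.1 := by simp [wC]

lemma nsq_add (z w : Fin n → ℂ) :
    nsq (z + w) = nsq z + nsq w + 2 * (hermInner z w).re := by
  simp only [nsq, hermInner, Pi.add_apply, Complex.normSq_add, Complex.re_sum,
    Finset.sum_add_distrib, Finset.mul_sum]

lemma wC_ext {x y : ℂ} (hre : x.re = y.re) (him : x.im = y.im) : x = y :=
  Complex.ext hre him

lemma wC_hmul (a b : Heis n) :
    wC (hmul a b) = wC a + wC b + 2 * Complex.I * (starRingEnd ℂ) (hermInner a.1 b.1) := by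
  apply Complex.ext
  · simp [hmul, Complex.add_re, Complex.mul_re]
  · simp [Complex.add_im, Complex.mul_im, hmul, nsq_add]

@[simp] lemma hermInner_zero_left (w : Fin n → ℂ) : hermInner 0 w = 0 := by
  simp [hermInner]

@[simp] lemma hermInner_zero_right (z : Fin n → ℂ) : hermInner z 0 = 0 := by
  simp [hermInner]

@[simp] lemma hmul_zero_right (a : Heis n) : hmul a 0 = a := by
  simp [hmul]

@[simp] lemma hmul_zero_left (a : Heis n) : hmul 0 a = a := by
  simp [hmul]

lemma hermInner_neg_left (z w : Fin n → ℂ) : hermInner (-z) w = -hermInner z w := by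
  simp [hermInner, Finset.sum_neg_distrib]

lemma hermInner_neg_right (z w : Fin n → ℂ) : hermInner z (-w) = -hermInner z w := by
  simp [hermInner, Finset.sum_neg_distrib]

lemma hermInner_add_left (x y w : Fin n → ℂ) :
    hermInner (x + y) w = hermInner x w + hermInner y w := by
  simp [hermInner, add_mul, Finset.sum_add_distrib]

lemma hermInner_add_right (z x y : Fin n → ℂ) :
    hermInner z (x + y) = hermInner z x + hermInner z y := by
  simp [hermInner, mul_add, Finset.sum_add_distrib]

lemma hinv_hmul_cancel (a b : Heis n) : hmul (hinv a) (hmul a b) = b := by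
  ext1
  · simp [hmul, hinv]
  · simp [hmul, hinv, hermInner_neg_left, hermInner_add_right, hermInner_self_im]
    ring

lemma hmul_hinv_cancel (a b : Heis n) : hmul a (hmul (hinv a) b) = b := by
  ext1
  · simp [hmul, hinv]
  · simp [hmul, hinv, hermInner_neg_left, hermInner_neg_right, hermInner_add_right,
      hermInner_self_im]
    ring

lemma hinv_hmul (a b : Heis n) : hinv (hmul a b) = hmul (hinv b) (hinv a) := by
  ext1
  · simp [hmul, hinv]
  · have h2 : (hermInner b.1 a.1).im = -(hermInner a.1 b.1).im := by
      rw [← hermInner_conj]; simp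
    simp only [hmul, hinv, hermInner_neg_left, hermInner_neg_right]
    simp only [Complex.neg_im, h2]
    ring

@[simp] lemma nsq_neg (z : Fin n → ℂ) : nsq (-z) = nsq z := by simp [nsq]

@[simp] lemma korNorm_hinv (a : Heis n) : korNorm (hinv a) = korNorm a := by
  simp [korNorm, hinv]

lemma dH_eq (ξ ζ : Heis n) : dH ξ ζ = korNorm (hmul (hinv ξ) ζ) := by
  rw [dH, ← korNorm_hinv (hmul (hinv ξ) ζ), hinv_hmul]
  congr 1
  ext1 <;> simp [hinv]

lemma normSq_wC (a : Heis n) : Complex.normSq (wC a) = nsq a.1 ^ 2 + a.2 ^ 2 := by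
  rw [Complex.normSq_apply]
  simp [wC_re, wC_im]
  ring

lemma korNorm_sq (a : Heis n) : korNorm a ^ 2 = ‖wC a‖ := by
  have hX : (0:ℝ) ≤ nsq a.1 ^ 2 + a.2 ^ 2 := by positivity
  rw [Complex.norm_def, normSq_wC, korNorm]
  rw [← Real.rpow_natCast ((nsq a.1 ^ 2 + a.2 ^ 2) ^ ((1:ℝ)/4)) 2, ← Real.rpow_mul hX]
  rw [Real.sqrt_eq_rpow]
  norm_num

lemma korNorm_nonneg (a : Heis n) : 0 ≤ korNorm a :=
  Real.rpow_nonneg (by positivity) _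

lemma wC_eq_zero_iff (a : Heis n) : wC a = 0 ↔ a = 0 := by
  constructor
  · intro hw
    have hre : a.2 = 0 := by have := congrArg Complex.re hw; simpa using this
    have him : nsq a.1 = 0 := by have := congrArg Complex.im hw; simpa using this
    have hz : a.1 = 0 := by
      funext j
      have : Complex.normSq (a.1 j) = 0 := by
        have h1 : ∀ j ∈ Finset.univ, (0:ℝ) ≤ Complex.normSq (a.1 j) :=
          fun j _ => Complex.normSq_nonneg _
        have := (Finset.sum_eq_zero_iff_of_nonneg h1).mp him j (Finset.mem_univ j)
        exact this
      simpa using Complex.normSq_eq_zero.mp this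
    ext1 <;> simp [hz, hre]
  · rintro rfl
    simp [wC, nsq]

lemma korNorm_pos {a : Heis n} (ha : a ≠ 0) : 0 < korNorm a := by
  have hw : wC a ≠ 0 := fun hw => ha ((wC_eq_zero_iff a).mp hw)
  have habs : 0 < ‖wC a‖ := by
    simpa using (norm_pos_iff.mpr hw)
  have := korNorm_sq a
  nlinarith [korNorm_nonneg a]

@[simp] lemma nsq_conj (z : Fin n → ℂ) :
    nsq (fun j => (starRingEnd ℂ) (z j)) = nsq z := by
  simp [nsq]

lemma wC_iota (a : Heis n) : wC (iota a) = -(starRingEnd ℂ) (wC a) := by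
  apply Complex.ext
  · simp [iota]
  · simp [iota]

lemma nsq_div (z : Fin n → ℂ) (w : ℂ) :
    nsq (fun j => z j / w) = nsq z / Complex.normSq w := by
  simp only [nsq, map_div₀]
  rw [Finset.sum_div]

lemma wC_crInv {a : Heis n} (ha : wC a ≠ 0) : wC (crInv a) = -(wC a)⁻¹ := by
  apply Complex.ext
  · simp [crInv, Complex.inv_re, nsq_div, neg_div]
  · simp [crInv, Complex.inv_im, nsq_div, neg_div]

lemma wC_dil (lam : ℝ) (a : Heis n) : wC (dil lam a) = lam ^ 2 * wC a := by
  have hnsq : nsq (fun j => (lam:ℂ) * a.1 j) = lam ^ 2 * nsq a.1 := by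
    simp only [nsq, Complex.normSq_mul, Complex.normSq_ofReal, Finset.mul_sum, ← sq]
  simp only [wC, dil, hnsq]
  push_cast
  ring

lemma Mmat_mulVec (ξ : Heis n) (β : ℝ) (v : Fin n → ℂ) (k : Fin n) :
    (Mmat ξ β).mulVec v k = Complex.exp (Complex.I * ((theta ξ β k : ℝ) : ℂ)) * v k := by
  rw [Mmat, Matrix.mulVec_diagonal]

lemma normSq_expI (x : ℝ) : Complex.normSq (Complex.exp (Complex.I * (x:ℂ))) = 1 := by
  rw [Complex.normSq_eq_norm_sq, Complex.norm_exp]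
  simp

lemma nsq_rot (ξ : Heis n) (β : ℝ) (a : Heis n) :
    nsq ((Mmat ξ β).mulVec a.1) = nsq a.1 := by
  simp only [nsq]
  refine Finset.sum_congr rfl fun k _ => ?_
  rw [Mmat_mulVec, Complex.normSq_mul, normSq_expI, one_mul]

lemma wC_rot (ξ : Heis n) (β : ℝ) (a : Heis n) : wC (rot (Mmat ξ β) a) = wC a := by
  apply Complex.ext
  · simp [rot]
  · simp [rot, nsq_rot]

lemma exp_arg_mul_I {z : ℂ} (hz0 : z ≠ 0) :
    Complex.exp ((z.arg : ℂ) * Complex.I) = z / ‖z‖ := by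
  have habs : ((‖z‖ : ℝ) : ℂ) ≠ 0 := by
    simpa using hz0
  rw [eq_div_iff habs, mul_comm]
  exact Complex.norm_mul_exp_arg_mul_I z

lemma exp_theta_conj (ξ : Heis n) (β : ℝ) (hW : wC ξ + Complex.I * (β:ℂ) ≠ 0) (k : Fin n) :
    Complex.exp (Complex.I * ((theta ξ β k : ℝ) : ℂ)) * (starRingEnd ℂ) (ξ.1 k)
      = ((wC ξ + Complex.I * (β:ℂ)) / ‖wC ξ + Complex.I * (β:ℂ)‖) * ξ.1 k := by
  set W := wC ξ + Complex.I * (β:ℂ) with hWdef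
  by_cases hz : ξ.1 k = 0
  · simp [hz]
  · rw [theta, if_pos hz]
    set x := ξ.1 k with hxdef
    have hsplit : Complex.I * (((2 * x.arg + W.arg : ℝ)) : ℂ)
        = ((x.arg:ℂ) * Complex.I + (x.arg:ℂ) * Complex.I) + (W.arg:ℂ) * Complex.I := by
      push_cast; ring
    rw [hsplit, Complex.exp_add, Complex.exp_add, exp_arg_mul_I hz, exp_arg_mul_I hW]
    have hns : x * (starRingEnd ℂ) x = (Complex.normSq x : ℂ) := Complex.mul_conj x
    have hax2 : ((‖x‖ : ℝ) : ℂ) * ((‖x‖ : ℝ) : ℂ)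
        = (Complex.normSq x : ℂ) := by
      rw [← Complex.ofReal_mul, Complex.normSq_eq_norm_sq]
      norm_cast
      ring
    have habs : ((‖x‖ : ℝ) : ℂ) ≠ 0 := by simpa using hz
    have hnsne : (Complex.normSq x : ℂ) ≠ 0 := by
      have := Complex.normSq_pos.mpr hz
      exact_mod_cast ne_of_gt this
    have key : (x / ((‖x‖ : ℝ) : ℂ)) * (x / ((‖x‖ : ℝ) : ℂ))
        * (starRingEnd ℂ) x = x := by
      rw [div_mul_div_comm, div_mul_eq_mul_div, div_eq_iff (mul_ne_zero habs habs)]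
      linear_combination x * hns - x * hax2
    linear_combination (W / ((‖W‖ : ℝ) : ℂ)) * key

lemma hermInner_rot (ξ η : Heis n) (lam β : ℝ)
    (hW : wC ξ + Complex.I * (β:ℂ) ≠ 0) :
    hermInner ((rot (Mmat ξ β) (dil (lam ^ 2) (crInv (iota η)))).1) ξ.1
      = (((lam:ℂ)) ^ 2 * ((wC ξ + Complex.I * (β:ℂ)) / ‖wC ξ + Complex.I * (β:ℂ)‖)
          / wC (iota η)) * hermInner ξ.1 η.1 := by
  unfold hermInner
  rw [Finset.mul_sum]
  refine Finset.sum_congr rfl fun k _ => ?_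
  have hr : (rot (Mmat ξ β) (dil (lam ^ 2) (crInv (iota η)))).1 k
      = Complex.exp (Complex.I * ((theta ξ β k : ℝ) : ℂ))
        * (((lam ^ 2 : ℝ) : ℂ) * ((starRingEnd ℂ) (η.1 k) / wC (iota η))) := by
    show (Mmat ξ β).mulVec (dil (lam ^ 2) (crInv (iota η))).1 k = _
    rw [Mmat_mulVec]
    rfl
  rw [hr]
  have hc := exp_theta_conj ξ β hW k
  push_cast
  linear_combination ((lam:ℂ)^2 * (starRingEnd ℂ) (η.1 k) / wC (iota η)) * hc

lemma wC_Phi_mul (ξ ζ : Heis n) (lam β : ℝ) (hW : wC ξ + Complex.I * (β:ℂ) ≠ 0)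
    (hη : wC (hmul (hinv ξ) ζ) ≠ 0) :
    wC (Phi ξ lam β ζ) * (starRingEnd ℂ) (wC (hmul (hinv ξ) ζ))
      = wC ξ * (starRingEnd ℂ) (wC (hmul (hinv ξ) ζ)) + ((lam:ℂ)) ^ 4
        - 2 * Complex.I * ((lam:ℂ)) ^ 2
          * ((wC ξ + Complex.I * (β:ℂ)) / ‖wC ξ + Complex.I * (β:ℂ)‖)
          * hermInner ξ.1 (hmul (hinv ξ) ζ).1 := by
  set η := hmul (hinv ξ) ζ with hetadef
  have hAc : (starRingEnd ℂ) (wC η) ≠ 0 := by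
    simpa using hη
  have hiota : wC (iota η) = -(starRingEnd ℂ) (wC η) := wC_iota η
  have hiota_ne : wC (iota η) ≠ 0 := by
    rw [hiota]; simpa using hη
  have hcr : wC (crInv (iota η)) = -(wC (iota η))⁻¹ := wC_crInv hiota_ne
  have hwr : wC (rot (Mmat ξ β) (dil (lam ^ 2) (crInv (iota η))))
      = ((lam ^ 2 : ℝ):ℂ) ^ 2 * -(wC (iota η))⁻¹ := by
    rw [wC_rot, wC_dil, hcr]
  have hPhi : wC (Phi ξ lam β ζ)
      = wC ξ + wC (rot (Mmat ξ β) (dil (lam ^ 2) (crInv (iota η))))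
        + 2 * Complex.I * hermInner ((rot (Mmat ξ β) (dil (lam ^ 2) (crInv (iota η)))).1) ξ.1 := by
    rw [Phi, tau, ← hetadef, wC_hmul, hermInner_conj]
  have habsW : ((‖wC ξ + Complex.I * (β:ℂ)‖ : ℝ) : ℂ) ≠ 0 := by
    simpa using hW
  rw [hPhi, hwr, hermInner_rot ξ η lam β hW, hiota]
  field_simp [hAc, habsW]
  push_cast
  ring
lemma hmul_taxis (ξ : Heis n) (x : ℝ) :
    hmul ξ ((0 : Fin n → ℂ), x) = (ξ.1, ξ.2 + x) := by
  ext1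
  · simp [hmul]
  · simp [hmul]

lemma korNorm_taxis {R : ℝ} (hR : 0 ≤ R) :
    korNorm ((0 : Fin n → ℂ), R) = R ^ ((1:ℝ)/2) := by
  have hnsq : nsq (0 : Fin n → ℂ) = 0 := by simp [nsq]
  rw [korNorm]
  simp only [hnsq]
  rw [show (0:ℝ)^2 + R^2 = R^2 by ring, ← Real.rpow_natCast R 2, ← Real.rpow_mul hR]
  norm_num

lemma Phi_taxis (ξ : Heis n) (lam β : ℝ) {R : ℝ} (hR : R ≠ 0) :
    Phi ξ lam β (hmul ξ ((0 : Fin n → ℂ), R)) = hmul ξ ((0 : Fin n → ℂ), lam ^ 4 / R) := by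
  rw [Phi, hinv_hmul_cancel]
  congr 1
  have hiota : iota ((0 : Fin n → ℂ), R) = ((0 : Fin n → ℂ), -R) := by
    ext1
    · funext j; simp [iota]
    · simp [iota]
  rw [hiota]
  have hw : wC ((0 : Fin n → ℂ), -R) = ((-R : ℝ) : ℂ) := by
    have hnsq : nsq (0 : Fin n → ℂ) = 0 := by simp [nsq]
    rw [wC]
    simp [hnsq]
  have hcr : crInv ((0 : Fin n → ℂ), -R) = ((0 : Fin n → ℂ), R / R ^ 2) := by
    rw [crInv, hw]
    ext1
    · funext j; simp
    · simp [Complex.normSq_ofReal]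
      rw [pow_two, ← div_div, div_self hR, one_div]
  rw [hcr]
  have hdil : dil (lam ^ 2) ((0 : Fin n → ℂ), R / R ^ 2)
      = ((0 : Fin n → ℂ), lam ^ 4 / R) := by
    rw [dil]
    ext1
    · funext j; simp
    · simp only []
      field_simp
  rw [hdil, rot]
  ext1
  · simp [Matrix.mulVec_zero]
  · rfl

lemma alpha_eq {ν : ℝ} (hν : 0 < ν) {f : Heis n → ℝ} (hcont : Continuous f)
    {α : ℝ}
    (hlim : Tendsto (fun ζ => korNorm ζ ^ ν * f ζ) (atInftyH n) (nhds α))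
    {β : ℝ} (ξ : Heis n) {lam : ℝ} (hlam : 0 < lam)
    (heq : ∀ ζ : Heis n, ζ ≠ ξ → (lam / dH ξ ζ) ^ ν * f (Phi ξ lam β ζ) = f ζ) :
    α = lam ^ ν * f ξ := by
  set ζR : ℝ → Heis n := fun R => (ξ.1, ξ.2 + R) with hzR
  have hkor : Tendsto (fun R => korNorm (ζR R)) atTop atTop := by
    have h2 : Tendsto (fun R : ℝ => ξ.2 + R) atTop atTop :=
      tendsto_atTop_add_const_left _ _ tendsto_id
    have h1 : Tendsto (fun R : ℝ => nsq ξ.1 ^ 2 + (ξ.2 + R) ^ 2) atTop atTop :=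
      tendsto_atTop_add_const_left _ _ ((tendsto_pow_atTop two_ne_zero).comp h2)
    exact (tendsto_rpow_atTop (by norm_num : (0:ℝ) < 1/4)).comp h1
  have hto : Tendsto ζR atTop (atInftyH n) := by
    rw [atInftyH, Filter.tendsto_comap_iff]
    exact hkor
  have hlim1 : Tendsto (fun R => korNorm (ζR R) ^ ν * f (ζR R)) atTop (nhds α) :=
    hlim.comp hto
  have hfcont : Tendsto (fun R : ℝ => f (ξ.1, ξ.2 + lam ^ 4 / R)) atTop (nhds (f ξ)) := by
    have hdiv : Tendsto (fun R : ℝ => lam ^ 4 / R) atTop (nhds 0) :=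
      Tendsto.div_atTop tendsto_const_nhds tendsto_id
    have hadd : Tendsto (fun R : ℝ => ξ.2 + lam ^ 4 / R) atTop (nhds ξ.2) := by
      have := Tendsto.add (tendsto_const_nhds (x := ξ.2) (f := atTop)) hdiv
      simpa using this
    have hpair : Tendsto (fun R : ℝ => ((ξ.1, ξ.2 + lam ^ 4 / R) : Heis n)) atTop
        (nhds (ξ.1, ξ.2)) :=
      Tendsto.prodMk_nhds tendsto_const_nhds hadd
    have := (hcont.tendsto (ξ.1, ξ.2)).comp hpair
    exact this
  have hq : Tendsto (fun R : ℝ => (nsq ξ.1 ^ 2 + (ξ.2 + R) ^ 2) / R ^ 2) atTop (nhds 1) := by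
    have hg : Tendsto (fun x : ℝ => nsq ξ.1 ^ 2 * x ^ 2 + (ξ.2 * x + 1) ^ 2) (nhds 0)
        (nhds (nsq ξ.1 ^ 2 * 0 ^ 2 + (ξ.2 * 0 + 1) ^ 2)) := by
      apply Continuous.tendsto
      continuity
    have hcomp := hg.comp (tendsto_inv_atTop_zero)
    have : ∀ᶠ R in (atTop : Filter ℝ), nsq ξ.1 ^ 2 * (R⁻¹) ^ 2 + (ξ.2 * R⁻¹ + 1) ^ 2
        = (nsq ξ.1 ^ 2 + (ξ.2 + R) ^ 2) / R ^ 2 := by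
      filter_upwards [eventually_gt_atTop 0] with R hR
      field_simp
    have h2 := hcomp.congr' this
    simpa using h2
  have hratio : Tendsto (fun R : ℝ => korNorm (ζR R) / R ^ ((1:ℝ)/2)) atTop (nhds 1) := by
    have hc : ContinuousAt (fun x : ℝ => x ^ ((1:ℝ)/4)) 1 :=
      Real.continuousAt_rpow_const 1 (1/4) (Or.inl one_ne_zero)
    have h3 := (hc.tendsto.comp hq)
    rw [Real.one_rpow] at h3
    apply h3.congr'
    filter_upwards [eventually_gt_atTop 0] with R hR
    have hXnn : (0:ℝ) ≤ nsq ξ.1 ^ 2 + (ξ.2 + R) ^ 2 := by positivity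
    have hR2 : (0:ℝ) ≤ R ^ 2 := by positivity
    show ((nsq ξ.1 ^ 2 + (ξ.2 + R) ^ 2) / R ^ 2) ^ ((1:ℝ)/4) = korNorm (ζR R) / R ^ ((1:ℝ)/2)
    rw [Real.div_rpow hXnn hR2]
    congr 1
    rw [← Real.rpow_natCast R 2, ← Real.rpow_mul hR.le]
    norm_num
  have key : ∀ᶠ R in (atTop : Filter ℝ), korNorm (ζR R) ^ ν * f (ζR R)
      = ((korNorm (ζR R) / R ^ ((1:ℝ)/2)) * lam) ^ ν * f (ξ.1, ξ.2 + lam ^ 4 / R) := by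
    filter_upwards [eventually_gt_atTop 0] with R hR
    have hmulz : ζR R = hmul ξ ((0 : Fin n → ℂ), R) := by
      rw [hmul_taxis]
    have hne : ζR R ≠ ξ := by
      intro hcon
      have : ξ.2 + R = ξ.2 := congrArg Prod.snd hcon
      linarith
    have heqR := heq (ζR R) hne
    have hdH : dH ξ (ζR R) = R ^ ((1:ℝ)/2) := by
      rw [dH_eq, hmulz, hinv_hmul_cancel, korNorm_taxis hR.le]
    have hPhiR : Phi ξ lam β (ζR R) = (ξ.1, ξ.2 + lam ^ 4 / R) := by
      rw [hmulz, Phi_taxis ξ lam β (ne_of_gt hR), hmul_taxis]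
    rw [hdH, hPhiR] at heqR
    have hrpos : (0:ℝ) < R ^ ((1:ℝ)/2) := Real.rpow_pos_of_pos hR _
    rw [← heqR, ← mul_assoc, ← Real.mul_rpow (korNorm_nonneg _) (by positivity)]
    have harr : korNorm (ζR R) * (lam / R ^ ((1:ℝ)/2))
        = korNorm (ζR R) / R ^ ((1:ℝ)/2) * lam := by ring
    rw [harr]
  have hlim2 : Tendsto (fun R : ℝ => ((korNorm (ζR R) / R ^ ((1:ℝ)/2)) * lam) ^ ν
      * f (ξ.1, ξ.2 + lam ^ 4 / R)) atTop (nhds (lam ^ ν * f ξ)) := by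
    have hbase : Tendsto (fun R : ℝ => (korNorm (ζR R) / R ^ ((1:ℝ)/2)) * lam) atTop
        (nhds lam) := by
      have := hratio.mul (tendsto_const_nhds (x := lam) (f := (atTop : Filter ℝ)))
      simpa using this
    have hc : ContinuousAt (fun x : ℝ => x ^ ν) lam :=
      Real.continuousAt_rpow_const lam ν (Or.inl (ne_of_gt hlam))
    exact (hc.tendsto.comp hbase).mul hfcont
  exact tendsto_nhds_unique (hlim1.congr' key) hlim2

lemma sandwich_step {k T G : ℝ → ℝ}
    (hk : ∀ s s' : ℝ, k s' - k s ≥ 2 * (s' - s) * G s)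
    (hT : ∀ s s' : ℝ, T s' - T s ≥ 2 * (s' - s) * G s)
    (x y : ℝ) :
    |(k y - T y) - (k x - T x)| ≤ 2 * (y - x) * (G y - G x) := by
  have h1 := hk x y
  have h2 := hk y x
  have h3 := hT x y
  have h4 := hT y x
  rw [abs_le]
  constructor <;> nlinarith

lemma sandwich_aux {k T G : ℝ → ℝ}
    (hk : ∀ s s' : ℝ, k s' - k s ≥ 2 * (s' - s) * G s)
    (hT : ∀ s s' : ℝ, T s' - T s ≥ 2 * (s' - s) * G s)
    (a b : ℝ) (N : ℕ) (hN : 0 < N) :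
    |(k b - T b) - (k a - T a)| ≤ 2 * ((b - a)/N) * (G b - G a) := by
  set D : ℝ → ℝ := fun x => k x - T x with hD
  set δ : ℝ := (b - a)/N with hδ
  set sp : ℕ → ℝ := fun i => a + i * δ with hsp
  have hs0 : sp 0 = a := by simp [hsp]
  have hsN : sp N = b := by
    simp only [hsp, hδ]
    field_simp
    ring
  have htel : D b - D a = ∑ i ∈ Finset.range N, (D (sp (i+1)) - D (sp i)) := by
    rw [Finset.sum_range_sub (fun i => D (sp i))]
    rw [hs0, hsN]
  have hGtel : G b - G a = ∑ i ∈ Finset.range N, (G (sp (i+1)) - G (sp i)) := by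
    rw [Finset.sum_range_sub (fun i => G (sp i))]
    rw [hs0, hsN]
  have hdiff : ∀ i : ℕ, sp (i+1) - sp i = δ := by
    intro i
    simp only [hsp]
    push_cast
    ring
  calc |D b - D a| = |∑ i ∈ Finset.range N, (D (sp (i+1)) - D (sp i))| := by rw [htel]
    _ ≤ ∑ i ∈ Finset.range N, |D (sp (i+1)) - D (sp i)| := Finset.abs_sum_le_sum_abs _ _
    _ ≤ ∑ i ∈ Finset.range N, 2 * δ * (G (sp (i+1)) - G (sp i)) := by
        apply Finset.sum_le_sum
        intro i _
        have := sandwich_step hk hT (sp i) (sp (i+1))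
        rw [hdiff i] at this
        exact this
    _ = 2 * δ * (G b - G a) := by
        rw [← Finset.mul_sum, ← hGtel]

lemma sandwich_const {k T G : ℝ → ℝ}
    (hk : ∀ s s' : ℝ, k s' - k s ≥ 2 * (s' - s) * G s)
    (hT : ∀ s s' : ℝ, T s' - T s ≥ 2 * (s' - s) * G s)
    (a b : ℝ) :
    k b - T b = k a - T a := by
  have key : ∀ c : ℝ, (∀ N : ℕ, 0 < N → |c| ≤ 2 * ((b - a)/N) * (G b - G a)) → c = 0 := by
    intro c hc
    by_contra hc0
    have hcpos : 0 < |c| := abs_pos.mpr hc0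
    set C : ℝ := 2 * (b - a) * (G b - G a) with hC
    obtain ⟨N, hN⟩ := exists_nat_gt (max 1 (C / |c|))
    have hN1 : 0 < N := by
      have : (1:ℝ) < N := lt_of_le_of_lt (le_max_left _ _) hN
      exact_mod_cast lt_trans zero_lt_one this
    have hb := hc N hN1
    have hNpos : (0:ℝ) < N := by exact_mod_cast hN1
    have harr : 2 * ((b - a)/N) * (G b - G a) = C / N := by
      rw [hC]; field_simp
    rw [harr] at hb
    have hCc : C / |c| < N := lt_of_le_of_lt (le_max_right _ _) hN
    have : C / N < |c| := by
      rw [div_lt_iff₀ hNpos]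
      rw [div_lt_iff₀ hcpos] at hCc
      linarith [hCc]
    linarith
  have := key ((k b - T b) - (k a - T a)) (fun N hN => sandwich_aux hk hT a b N hN)
  linarith [this]

lemma hermInner_self (z : Fin n → ℂ) : hermInner z z = ((nsq z : ℝ) : ℂ) := by
  apply Complex.ext
  · simp [hermInner, nsq, Complex.re_sum, Complex.mul_conj]
  · simp [hermInner_self_im]

lemma hermInner_smul_left (c : ℂ) (z w : Fin n → ℂ) :
    hermInner (fun j => c * z j) w = c * hermInner z w := by
  simp [hermInner, Finset.mul_sum, mul_assoc]

lemma hermInner_smul_right (c : ℝ) (z w : Fin n → ℂ) :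
    hermInner z (fun j => (c:ℂ) * w j) = (c:ℂ) * hermInner z w := by
  simp only [hermInner, map_mul, Complex.conj_ofReal, Finset.mul_sum]
  refine Finset.sum_congr rfl fun j _ => by ring

lemma hmul_assoc (a b c : Heis n) : hmul (hmul a b) c = hmul a (hmul b c) := by
  ext1
  · simp [hmul, add_assoc]
  · simp [hmul, hermInner_add_left, hermInner_add_right]
    ring

lemma hinv_hmul_self (a : Heis n) : hmul (hinv a) a = 0 := by
  ext1
  · simp [hmul, hinv]
  · simp [hmul, hinv, hermInner_neg_left, hermInner_self_im]

lemma ne_of_eta_ne {ξ ζ : Heis n} (hη : hmul (hinv ξ) ζ ≠ 0) : ζ ≠ ξ := by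
  intro hcon
  apply hη
  rw [hcon, hinv_hmul_self]

lemma eta_ne_of_ne {ξ ζ : Heis n} (hne : ζ ≠ ξ) : hmul (hinv ξ) ζ ≠ 0 := by
  intro hcon
  apply hne
  have := congrArg (hmul ξ) hcon
  rw [hmul_hinv_cancel, hmul_zero_right] at this
  exact this

/-- points on a horizontal line -/
def gam (ξ₀ : Heis n) (u : Fin n → ℂ) (s : ℝ) : Heis n :=
  hmul ξ₀ ((fun j => (s:ℂ) * u j), 0)

lemma gam_zero (ξ₀ : Heis n) (u : Fin n → ℂ) : gam ξ₀ u 0 = ξ₀ := by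
  rw [gam]
  have : (fun j => ((0:ℝ):ℂ) * u j) = (0 : Fin n → ℂ) := by
    funext j; simp
  rw [this]
  exact hmul_zero_right ξ₀

lemma gam_one (ξ₀ : Heis n) (u : Fin n → ℂ) :
    gam ξ₀ u 1 = hmul ξ₀ (u, 0) := by
  rw [gam]
  congr 1
  ext1
  · funext j; simp
  · rfl

lemma gam_eta (ξ₀ : Heis n) (u : Fin n → ℂ) (s s' : ℝ) :
    hmul (hinv (gam ξ₀ u s)) (gam ξ₀ u s')
      = ((fun j => ((s' - s : ℝ):ℂ) * u j), 0) := by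
  rw [gam, gam, hinv_hmul]
  rw [hmul_assoc, ← hmul_assoc (hinv ξ₀), hinv_hmul_self, hmul_zero_left]
  ext1
  · funext j
    simp [hmul, hinv]
    push_cast
    ring
  · simp only [hmul, hinv]
    have h1 : hermInner (-fun j => ((s:ℝ):ℂ) * u j) (fun j => ((s':ℝ):ℂ) * u j)
        = ((-(s*s') * nsq u : ℝ) : ℂ) := by
      rw [hermInner_neg_left, hermInner_smul_left, hermInner_smul_right, hermInner_self]
      push_cast
      ring
    rw [h1]
    simp

lemma wC_line (u : Fin n → ℂ) (c : ℝ) :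
    wC ((fun j => (c:ℂ) * u j), (0:ℝ)) = Complex.I * ((c^2 * nsq u : ℝ) : ℂ) := by
  have hnsq : nsq (fun j => (c:ℂ) * u j) = c^2 * nsq u := by
    simp only [nsq, Complex.normSq_mul, Complex.normSq_ofReal, Finset.mul_sum, ← sq]
  rw [wC]
  simp [hnsq]

lemma wC_gam (ξ₀ : Heis n) (u : Fin n → ℂ) (s : ℝ) :
    wC (gam ξ₀ u s) = wC ξ₀ + Complex.I * ((s^2 * nsq u : ℝ) : ℂ)
      + 2 * Complex.I * (s:ℂ) * (starRingEnd ℂ) (hermInner ξ₀.1 u) := by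
  rw [gam, wC_hmul, wC_line]
  have : hermInner ξ₀.1 (fun j => ((s:ℝ):ℂ) * u j) = (s:ℂ) * hermInner ξ₀.1 u :=
    hermInner_smul_right s ξ₀.1 u
  rw [this]
  simp only [map_mul, Complex.conj_ofReal]
  ring

lemma gam_fst (ξ₀ : Heis n) (u : Fin n → ℂ) (s : ℝ) :
    (gam ξ₀ u s).1 = ξ₀.1 + fun j => ((s:ℝ):ℂ) * u j := rfl

lemma hermInner_gam (ξ₀ : Heis n) (u : Fin n → ℂ) (s : ℝ) :
    hermInner (gam ξ₀ u s).1 u = hermInner ξ₀.1 u + (s:ℂ) * ((nsq u : ℝ):ℂ) := by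
  rw [gam_fst, hermInner_add_left, hermInner_smul_left, hermInner_self]

lemma W_ne_zero {β : ℝ} (hβ : 0 < β) (p : Heis n) :
    wC p + Complex.I * (β:ℂ) ≠ 0 := by
  intro hcon
  have him : (wC p + Complex.I * (β:ℂ)).im = 0 := by rw [hcon]; rfl
  simp only [Complex.add_im, wC_im, Complex.mul_im, Complex.I_re, Complex.I_im,
    Complex.ofReal_re, Complex.ofReal_im] at him
  have := nsq_nonneg p.1
  nlinarith

lemma absW_pos {β : ℝ} (hβ : 0 < β) (p : Heis n) :
    0 < ‖wC p + Complex.I * (β:ℂ)‖ :=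
  norm_pos_iff.mpr (W_ne_zero hβ p)

lemma T_line_ineq (ξ₀ : Heis n) (u : Fin n → ℂ) {β : ℝ} (hβ : 0 < β) (s s' : ℝ) :
    ‖wC (gam ξ₀ u s') + Complex.I * (β:ℂ)‖
      - ‖wC (gam ξ₀ u s) + Complex.I * (β:ℂ)‖
      ≥ 2 * (s' - s) * (((wC (gam ξ₀ u s) + Complex.I * (β:ℂ))
          * hermInner (gam ξ₀ u s).1 u).im
          / ‖wC (gam ξ₀ u s) + Complex.I * (β:ℂ)‖) := by
  set Ws : ℂ := wC (gam ξ₀ u s) + Complex.I * (β:ℂ) with hWs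
  set Ws' : ℂ := wC (gam ξ₀ u s') + Complex.I * (β:ℂ) with hWs'
  set hh : ℂ := hermInner (gam ξ₀ u s).1 u with hhh
  have hWid : Ws' = Ws + 2 * Complex.I * ((s' - s : ℝ):ℂ) * (starRingEnd ℂ) hh
      + Complex.I * ((s' - s : ℝ):ℂ)^2 * ((nsq u : ℝ) : ℂ) := by
    rw [hWs, hWs', hhh, wC_gam, wC_gam, hermInner_gam]
    simp only [map_add, map_mul, Complex.conj_ofReal, hermInner_conj]
    push_cast
    ring
  have hT0 : 0 < ‖Ws‖ := absW_pos hβ _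
  have hT0' : 0 < ‖Ws'‖ := absW_pos hβ _
  have hIm : Ws.im = nsq (gam ξ₀ u s).1 + β := by
    rw [hWs]
    simp [Complex.add_im, Complex.mul_im]
  have hRe : (Ws' * (starRingEnd ℂ) Ws).re
      = Complex.normSq Ws + 2 * (s' - s) * (Ws * hh).im + (s' - s)^2 * nsq u * Ws.im := by
    rw [hWid]
    simp only [← Complex.ofReal_pow, Complex.normSq_apply, Complex.add_re, Complex.add_im,
      Complex.mul_re, Complex.mul_im, Complex.I_re, Complex.I_im, Complex.ofReal_re,
      Complex.ofReal_im, Complex.conj_re, Complex.conj_im, Complex.re_ofNat, Complex.im_ofNat]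
    ring
  have hle : (Ws' * (starRingEnd ℂ) Ws).re ≤ ‖Ws'‖ * ‖Ws‖ := by
    calc (Ws' * (starRingEnd ℂ) Ws).re ≤ ‖Ws' * (starRingEnd ℂ) Ws‖ :=
          Complex.re_le_norm _
      _ = ‖Ws'‖ * ‖Ws‖ := by
          rw [norm_mul, Complex.norm_conj]
  have hnsq1 : 0 ≤ nsq u := nsq_nonneg u
  have hnsq2 : 0 ≤ Ws.im := by rw [hIm]; have := nsq_nonneg (gam ξ₀ u s).1; linarith
  have habs2 : Complex.normSq Ws = ‖Ws‖ * ‖Ws‖ := by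
    rw [Complex.normSq_eq_norm_sq]; ring
  have hmain : ‖Ws‖ * ‖Ws‖ + 2 * (s' - s) * (Ws * hh).im
      ≤ ‖Ws'‖ * ‖Ws‖ := by
    nlinarith [hRe, hle, mul_nonneg (mul_nonneg (sq_nonneg (s' - s)) hnsq1) hnsq2, habs2]
  rw [ge_iff_le, ← mul_div_assoc, div_le_iff₀ hT0]
  nlinarith [hmain]
lemma K_line_ineq {β : ℝ} (hβ : 0 < β) {K lamf : Heis n → ℝ}
    (hKpos : ∀ p, 0 < K p)
    (hlamK : ∀ p, 0 < lamf p ∧ lamf p ^ 2 = K p)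
    (hAbs : ∀ ξ ζ : Heis n, ζ ≠ ξ →
      ‖wC (Phi ξ (lamf ξ) β ζ) * (starRingEnd ℂ) (wC (hmul (hinv ξ) ζ))‖
        ≤ K ξ * K ζ)
    (ξ₀ : Heis n) (u : Fin n → ℂ) (s s' : ℝ) :
    K (gam ξ₀ u s') - K (gam ξ₀ u s)
      ≥ 2 * (s' - s) * (((wC (gam ξ₀ u s) + Complex.I * (β:ℂ))
          * hermInner (gam ξ₀ u s).1 u).im
          / ‖wC (gam ξ₀ u s) + Complex.I * (β:ℂ)‖) := by
  by_cases hdeg : (fun j => ((s' - s : ℝ):ℂ) * u j) = (0 : Fin n → ℂ)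
  · have hgam : gam ξ₀ u s' = gam ξ₀ u s := by
      have h1 := gam_eta ξ₀ u s s'
      have h2 : hmul (hinv (gam ξ₀ u s)) (gam ξ₀ u s') = (0 : Heis n) := by
        rw [h1]
        ext1
        · exact hdeg
        · rfl
      have h3 := congrArg (hmul (gam ξ₀ u s)) h2
      rw [hmul_hinv_cancel, hmul_zero_right] at h3
      exact h3
    rw [hgam]
    by_cases hss : s' = s
    · subst hss; simp
    · have hu : u = 0 := by
        funext j
        have := congrFun hdeg j
        simp only [Pi.zero_apply] at this ⊢
        rcases mul_eq_zero.mp this with hc | hc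
        · exfalso
          apply hss
          have : (s' - s : ℝ) = 0 := by exact_mod_cast hc
          linarith
        · exact hc
      rw [hu]
      simp [hermInner_zero_right]
  · set ξ := gam ξ₀ u s with hxi
    set ζ := gam ξ₀ u s' with hzeta
    have hηval : hmul (hinv ξ) ζ = ((fun j => ((s' - s : ℝ):ℂ) * u j), (0:ℝ)) :=
      gam_eta ξ₀ u s s'
    have hη : hmul (hinv ξ) ζ ≠ 0 := by
      rw [hηval]
      intro hcon
      exact hdeg (congrArg Prod.fst hcon)
    have hne : ζ ≠ ξ := ne_of_eta_ne hη
    obtain ⟨hlam0, hlamsq⟩ := hlamK ξ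
    have hW : wC ξ + Complex.I * (β:ℂ) ≠ 0 := W_ne_zero hβ ξ
    have habsW : 0 < ‖wC ξ + Complex.I * (β:ℂ)‖ := absW_pos hβ ξ
    have hwη : wC (hmul (hinv ξ) ζ) ≠ 0 := fun hcon => hη ((wC_eq_zero_iff _).mp hcon)
    have hPhi := wC_Phi_mul ξ ζ (lamf ξ) β hW hwη
    have hAbsle := hAbs ξ ζ hne
    rw [hPhi, hηval] at hAbsle
    rw [wC_line u (s' - s)] at hAbsle
    have hherm : hermInner ξ.1 (fun j => ((s' - s : ℝ):ℂ) * u j)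
        = ((s' - s : ℝ):ℂ) * hermInner ξ.1 u := hermInner_smul_right _ _ _
    rw [hherm] at hAbsle
    set W : ℂ := wC ξ + Complex.I * (β:ℂ) with hWdef
    set r : ℝ := ‖W‖ with hrdef
    set hh : ℂ := hermInner ξ.1 u with hhdef
    set c : ℝ := (s' - s)^2 * nsq u with hcdef
    set X : ℂ := wC ξ * (starRingEnd ℂ) (Complex.I * (c:ℝ)) + (lamf ξ:ℂ)^4
      - 2 * Complex.I * (lamf ξ:ℂ)^2 * (W / (r:ℝ)) * (((s' - s : ℝ):ℂ) * hh) with hXdef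
    have hrne : ((r:ℝ):ℂ) ≠ 0 := by
      simp only [ne_eq, Complex.ofReal_eq_zero]
      exact ne_of_gt habsW
    have hXr : X * ((r:ℝ):ℂ) = wC ξ * (-Complex.I * ((c:ℝ):ℂ)) * ((r:ℝ):ℂ)
        + (lamf ξ:ℂ)^4 * ((r:ℝ):ℂ)
        - 2 * Complex.I * ((s' - s : ℝ):ℂ) * (lamf ξ:ℂ)^2 * W * hh := by
      rw [hXdef]
      have hconj : (starRingEnd ℂ) (Complex.I * ((c:ℝ):ℂ)) = -Complex.I * ((c:ℝ):ℂ) := by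
        simp [map_mul, Complex.conj_ofReal]
      rw [hconj]
      field_simp
    have hre : (X * ((r:ℝ):ℂ)).re
        = c * nsq ξ.1 * r + (lamf ξ)^4 * r + 2 * (s' - s) * (lamf ξ)^2 * (W * hh).im := by
      rw [hXr]
      simp only [← Complex.ofReal_pow, Complex.sub_re, Complex.add_re, Complex.mul_re,
        Complex.mul_im, Complex.neg_re, Complex.neg_im, Complex.I_re, Complex.I_im,
        Complex.ofReal_re, Complex.ofReal_im, Complex.re_ofNat, Complex.im_ofNat, wC_im]
      ring
    have hXrle : (X * ((r:ℝ):ℂ)).re ≤ K ξ * K ζ * r := by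
      calc (X * ((r:ℝ):ℂ)).re ≤ ‖X * ((r:ℝ):ℂ)‖ := Complex.re_le_norm _
        _ = ‖X‖ * r := by
            rw [norm_mul, Complex.norm_real, Real.norm_eq_abs, abs_of_pos habsW]
        _ ≤ K ξ * K ζ * r := by
            apply mul_le_mul_of_nonneg_right _ (le_of_lt habsW)
            exact hAbsle
    have hlam4 : (lamf ξ)^4 = K ξ ^ 2 := by
      rw [← hlamsq]; ring
    have hcnn : 0 ≤ c * nsq ξ.1 * r := by
      have h1 : 0 ≤ c := by rw [hcdef]; exact mul_nonneg (sq_nonneg _) (nsq_nonneg u)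
      have h2 := nsq_nonneg ξ.1
      exact mul_nonneg (mul_nonneg h1 h2) (le_of_lt habsW)
    have hre' : (X * ((r:ℝ):ℂ)).re
        = c * nsq ξ.1 * r + K ξ ^ 2 * r + 2 * (s' - s) * K ξ * (W * hh).im := by
      rw [hre, ← hlamsq]
      ring
    have hmain : K ξ ^ 2 * r + 2 * (s' - s) * K ξ * (W * hh).im ≤ K ξ * K ζ * r := by
      linarith [hre', hXrle, hcnn]
    rw [ge_iff_le, ← mul_div_assoc, div_le_iff₀ habsW]
    rw [← mul_le_mul_iff_right₀ (hKpos ξ)]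
    nlinarith [hmain]
lemma hermInner_single_left (i : Fin n) (v : ℂ) (w : Fin n → ℂ) :
    hermInner (Pi.single i v) w = v * (starRingEnd ℂ) (w i) := by
  rw [hermInner]
  rw [Finset.sum_eq_single i (fun j _ hne => by simp [Pi.single_eq_of_ne hne])
    (fun hni => absurd (Finset.mem_univ i) hni)]
  simp

end CalcAux

/-- Calculus Lemma II of Li–Nirenberg–Zhu type. -/
theorem calculus_lemma_II (n : ℕ) (hn : 1 ≤ n) (ν : ℝ) (hν : 0 < ν)
    (f : Heis n → ℝ) (hcont : Continuous f) (hnonneg : ∀ p, 0 ≤ f p)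
    (hmax : ∀ p, f p ≤ f 0)
    (α : ℝ) (hα : 0 < α)
    (hlim : Tendsto (fun ζ => korNorm ζ ^ ν * f ζ) (atInftyH n) (nhds α))
    (β : ℝ) (hβ : β = α ^ (2 / ν) * f 0 ^ (-(2 / ν)))
    (h : ∀ ξ : Heis n, ∃ lam : ℝ, 0 < lam ∧
      ∀ ζ : Heis n, ζ ≠ ξ → (lam / dH ξ ζ) ^ ν * f (Phi ξ lam β ζ) = f ζ) :
    ∀ (z : Fin n → ℂ) (t : ℝ),
      f (z, t) = α * ‖(t : ℂ) + Complex.I * ((nsq z : ℝ) : ℂ)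
        + Complex.I * (β : ℂ)‖ ^ (-ν / 2) := by
  classical
  -- choose lambda
  set lamf : Heis n → ℝ := fun ξ => (h ξ).choose with hlamf
  have hlam0 : ∀ ξ, 0 < lamf ξ := fun ξ => (h ξ).choose_spec.1
  have heqf : ∀ ξ, ∀ ζ : Heis n, ζ ≠ ξ →
      (lamf ξ / dH ξ ζ) ^ ν * f (Phi ξ (lamf ξ) β ζ) = f ζ :=
    fun ξ => (h ξ).choose_spec.2
  have halpha : ∀ ξ, α = lamf ξ ^ ν * f ξ :=
    fun ξ => CalcAux.alpha_eq hν hcont hlim ξ (hlam0 ξ) (heqf ξ)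
  have hlampow : ∀ ξ, 0 < lamf ξ ^ ν := fun ξ => Real.rpow_pos_of_pos (hlam0 ξ) ν
  have hfval : ∀ ξ, f ξ = α / lamf ξ ^ ν := by
    intro ξ
    rw [eq_div_iff (ne_of_gt (hlampow ξ))]
    linarith [halpha ξ]
  have hfpos : ∀ ξ, 0 < f ξ := by
    intro ξ
    rw [hfval ξ]
    exact div_pos hα (hlampow ξ)
  set K : Heis n → ℝ := fun p => lamf p ^ 2 with hK
  have hKpos : ∀ p, 0 < K p := fun p => pow_pos (hlam0 p) 2
  have hlamK : ∀ p, 0 < lamf p ∧ lamf p ^ 2 = K p := fun p => ⟨hlam0 p, rfl⟩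
  -- beta = lamf 0 ^ 2
  have hbeta : β = lamf 0 ^ 2 := by
    have hf0 : f 0 = α / lamf 0 ^ ν := hfval 0
    have hL : 0 < lamf 0 ^ ν := hlampow 0
    have key : (α / lamf 0 ^ ν) ^ (-(2/ν)) = (lamf 0 ^ ν) ^ ((2:ℝ)/ν) / α ^ ((2:ℝ)/ν) := by
      rw [Real.rpow_neg (div_nonneg hα.le hL.le), Real.div_rpow hα.le hL.le, inv_div]
    rw [hβ, hf0, key]
    have hid : (lamf 0 ^ ν) ^ ((2:ℝ)/ν) = lamf 0 ^ 2 := by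
      rw [← Real.rpow_mul (hlam0 0).le]
      rw [show ν * (2/ν) = 2 by field_simp]
      rw [show (2:ℝ) = ((2:ℕ):ℝ) by norm_num, Real.rpow_natCast]
    rw [hid]
    have hαp : 0 < α ^ ((2:ℝ)/ν) := Real.rpow_pos_of_pos hα _
    field_simp
  have hβ0 : 0 < β := by rw [hbeta]; exact hKpos 0
  -- relation (A)
  have hArel : ∀ ξ ζ : Heis n, ζ ≠ ξ →
      K ξ * K ζ = ‖wC (hmul (hinv ξ) ζ)‖ * K (Phi ξ (lamf ξ) β ζ) := by
    intro ξ ζ hne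
    have hη : hmul (hinv ξ) ζ ≠ 0 := CalcAux.eta_ne_of_ne hne
    have hdpos : 0 < dH ξ ζ := by rw [CalcAux.dH_eq]; exact CalcAux.korNorm_pos hη
    have heq := heqf ξ ζ hne
    rw [hfval (Phi ξ (lamf ξ) β ζ), hfval ζ, Real.div_rpow (hlam0 ξ).le hdpos.le] at heq
    have h1 := hlampow ξ
    have h2 := hlampow ζ
    have h3 := hlampow (Phi ξ (lamf ξ) β ζ)
    have h4 : 0 < dH ξ ζ ^ ν := Real.rpow_pos_of_pos hdpos ν
    have hprod : (lamf ξ * lamf ζ) ^ ν = (dH ξ ζ * lamf (Phi ξ (lamf ξ) β ζ)) ^ ν := by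
      rw [Real.mul_rpow (hlam0 ξ).le (hlam0 ζ).le,
        Real.mul_rpow hdpos.le (hlam0 (Phi ξ (lamf ξ) β ζ)).le]
      field_simp at heq
      nlinarith [heq, hα]
    have hlin : lamf ξ * lamf ζ = dH ξ ζ * lamf (Phi ξ (lamf ξ) β ζ) := by
      rcases lt_trichotomy (lamf ξ * lamf ζ) (dH ξ ζ * lamf (Phi ξ (lamf ξ) β ζ)) with hlt | heq2 | hgt
      · exfalso
        have := Real.rpow_lt_rpow (mul_pos (hlam0 ξ) (hlam0 ζ)).le hlt hν
        linarith [hprod]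
      · exact heq2
      · exfalso
        have := Real.rpow_lt_rpow
          (mul_pos hdpos (hlam0 (Phi ξ (lamf ξ) β ζ))).le hgt hν
        linarith [hprod]
    have hd2 : dH ξ ζ ^ 2 = ‖wC (hmul (hinv ξ) ζ)‖ := by
      rw [CalcAux.dH_eq]
      exact CalcAux.korNorm_sq _
    calc K ξ * K ζ = (lamf ξ * lamf ζ) ^ 2 := by rw [hK]; ring
      _ = (dH ξ ζ * lamf (Phi ξ (lamf ξ) β ζ)) ^ 2 := by rw [hlin]
      _ = dH ξ ζ ^ 2 * K (Phi ξ (lamf ξ) β ζ) := by rw [hK]; ring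
      _ = ‖wC (hmul (hinv ξ) ζ)‖ * K (Phi ξ (lamf ξ) β ζ) := by rw [hd2]
  -- bound (1)
  have hlow : ∀ p : Heis n, ‖wC p‖ ≤ K p := by
    intro p
    by_cases hp : p = 0
    · subst hp
      have hw0 : wC (0 : Heis n) = 0 := (CalcAux.wC_eq_zero_iff 0).mpr rfl
      rw [hw0]
      simpa using (hKpos 0).le
    · have hd : dH 0 p = korNorm p := by
        rw [CalcAux.dH_eq]
        have h0 : hinv (0 : Heis n) = 0 := by
          ext1 <;> simp [hinv]
        rw [h0, CalcAux.hmul_zero_left]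
      have hdp : 0 < korNorm p := CalcAux.korNorm_pos hp
      have heq := heqf 0 p hp
      rw [hd] at heq
      have hub : f p ≤ (lamf 0 / korNorm p) ^ ν * f 0 := by
        rw [← heq]
        exact mul_le_mul_of_nonneg_left (hmax _) (Real.rpow_nonneg (div_nonneg (hlam0 0).le hdp.le) _)
      rw [hfval p, hfval 0, Real.div_rpow (hlam0 0).le hdp.le] at hub
      have hdν : 0 < korNorm p ^ ν := Real.rpow_pos_of_pos hdp ν
      have hub2 : α / lamf p ^ ν ≤ α / korNorm p ^ ν := by
        calc α / lamf p ^ ν ≤ lamf 0 ^ ν / korNorm p ^ ν * (α / lamf 0 ^ ν) := hub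
          _ = α / korNorm p ^ ν := by
              have hne1 : lamf 0 ^ ν ≠ 0 := ne_of_gt (hlampow 0)
              have hne2 : korNorm p ^ ν ≠ 0 := ne_of_gt hdν
              field_simp
      have h2 : korNorm p ^ ν ≤ lamf p ^ ν := by
        rw [div_le_div_iff₀ (hlampow p) hdν] at hub2
        exact le_of_mul_le_mul_left (by linarith) hα
      have h4 : korNorm p ≤ lamf p := by
        by_contra h5
        push_neg at h5
        have := Real.rpow_lt_rpow (hlam0 p).le h5 hν
        linarith
      calc ‖wC p‖ = korNorm p ^ 2 := (CalcAux.korNorm_sq p).symm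
        _ ≤ lamf p ^ 2 := by nlinarith [CalcAux.korNorm_nonneg p]
        _ = K p := rfl
  -- combined
  have hAbs : ∀ ξ ζ : Heis n, ζ ≠ ξ →
      ‖wC (Phi ξ (lamf ξ) β ζ) * (starRingEnd ℂ) (wC (hmul (hinv ξ) ζ))‖
        ≤ K ξ * K ζ := by
    intro ξ ζ hne
    rw [norm_mul, Complex.norm_conj, hArel ξ ζ hne]
    rw [mul_comm (‖wC (hmul (hinv ξ) ζ)‖) _]
    exact mul_le_mul_of_nonneg_right (hlow _) (norm_nonneg _)
  -- constancy along horizontal segments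
  set D : Heis n → ℝ := fun p => K p - ‖wC p + Complex.I * (β:ℂ)‖ with hD
  have hline : ∀ (ξ₀ : Heis n) (u : Fin n → ℂ), D (hmul ξ₀ (u, 0)) = D ξ₀ := by
    intro ξ₀ u
    have hk := fun s s' => CalcAux.K_line_ineq hβ0 hKpos hlamK hAbs ξ₀ u s s'
    have hT := fun s s' => CalcAux.T_line_ineq ξ₀ u hβ0 s s'
    have := CalcAux.sandwich_const (k := fun s => K (CalcAux.gam ξ₀ u s))
      (T := fun s => ‖wC (CalcAux.gam ξ₀ u s) + Complex.I * (β:ℂ)‖)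
      (G := fun s => ((wC (CalcAux.gam ξ₀ u s) + Complex.I * (β:ℂ))
          * hermInner (CalcAux.gam ξ₀ u s).1 u).im
          / ‖wC (CalcAux.gam ξ₀ u s) + Complex.I * (β:ℂ)‖)
      (fun s s' => hk s s') (fun s s' => hT s s') 0 1
    rw [CalcAux.gam_zero, CalcAux.gam_one] at this
    exact this
  -- D 0 = 0
  have hD0 : D 0 = 0 := by
    have hw0 : wC (0 : Heis n) = 0 := (CalcAux.wC_eq_zero_iff 0).mpr rfl
    have habs : ‖wC (0 : Heis n) + Complex.I * (β:ℂ)‖ = β := by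
      rw [hw0, zero_add, norm_mul, Complex.norm_I, Complex.norm_real, one_mul,
        Real.norm_eq_abs, abs_of_pos hβ0]
    show K 0 - ‖wC (0 : Heis n) + Complex.I * (β:ℂ)‖ = 0
    rw [habs]
    show lamf 0 ^ 2 - β = 0
    rw [← hbeta]
    ring
  -- D vanishes everywhere via explicit path
  have hDall : ∀ p : Heis n, D p = 0 := by
    rintro ⟨z, t⟩
    set i0 : Fin n := ⟨0, hn⟩ with hi0
    set x1 : ℝ := (z i0).re with hx1
    set y1 : ℝ := (z i0).im with hy1
    set σ : ℝ := x1 - 1 with hσ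
    set τ : ℝ := (t + 2 * σ * y1) / 2 with hτ
    set b : Fin n → ℂ := Pi.single i0 ((σ:ℝ):ℂ) with hb
    set c : Fin n → ℂ := Pi.single i0 (((τ:ℝ):ℂ) * Complex.I) with hc
    set dd : Fin n → ℂ := z - b - c with hdd
    set P1 : Heis n := ((b, 0) : Heis n) with hP1
    set P2 : Heis n := hmul P1 ((c, 0) : Heis n) with hP2
    have h1 : D P1 = D 0 := by
      have := hline 0 b
      rw [CalcAux.hmul_zero_left] at this
      exact this
    have h2 : D P2 = D P1 := hline P1 c
    have h3 : D (hmul P2 ((dd, 0) : Heis n)) = D P2 := hline P2 dd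
    have hbc : hermInner b c = -(((σ * τ : ℝ)):ℂ) * Complex.I := by
      rw [hb, CalcAux.hermInner_single_left, hc, Pi.single_eq_same]
      rw [map_mul, Complex.conj_ofReal, Complex.conj_I]
      push_cast
      ring
    have hsingle : b + c = Pi.single i0 (((σ:ℝ):ℂ) + ((τ:ℝ):ℂ) * Complex.I) := by
      rw [hb, hc, ← Pi.single_add]
    have hddi0 : dd i0 = z i0 - ((σ:ℝ):ℂ) - ((τ:ℝ):ℂ) * Complex.I := by
      rw [hdd]
      simp [hb, hc, Pi.single_eq_same]
    have hbcd : (hermInner (b + c) dd).im = τ * x1 - σ * y1 := by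
      rw [hsingle, CalcAux.hermInner_single_left, hddi0]
      simp only [map_sub, map_mul, Complex.conj_I, Complex.conj_ofReal,
        Complex.mul_im, Complex.mul_re, Complex.add_re, Complex.add_im,
        Complex.sub_re, Complex.sub_im, Complex.I_re, Complex.I_im,
        Complex.ofReal_re, Complex.ofReal_im, Complex.conj_re, Complex.conj_im,
        Complex.neg_re, Complex.neg_im]
      rw [← hx1, ← hy1]
      ring
    have hbcim : (hermInner b c).im = -(σ * τ) := by
      rw [hbc]
      simp [Complex.mul_im, Complex.neg_re, Complex.neg_im]
    have hP3 : hmul P2 ((dd, 0) : Heis n) = ((z, t) : Heis n) := by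
      have hfst : (hmul P2 ((dd, 0) : Heis n)).1 = z := by
        show (b + c) + dd = z
        rw [hdd]
        funext j
        simp
      have hsnd : (hmul P2 ((dd, 0) : Heis n)).2 = t := by
        show ((0:ℝ) + 0 + 2 * (hermInner b c).im) + 0 + 2 * (hermInner (b + c) dd).im = t
        rw [hbcd, hbcim, hτ, hσ]
        ring
      ext1
      · exact hfst
      · exact hsnd
    rw [hP3] at h3
    rw [h3, h2, h1, hD0]
  -- conclusion
  intro z t
  have hDzt := hDall (z, t)
  have hKT : K (z, t) = ‖wC (z, t) + Complex.I * (β:ℂ)‖ := by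
    rw [hD] at hDzt
    dsimp at hDzt
    linarith
  have hwzt : wC ((z, t) : Heis n) = (t : ℂ) + Complex.I * ((nsq z : ℝ) : ℂ) := rfl
  rw [hfval (z, t)]
  have hlnu : lamf (z, t) ^ ν
      = ‖(t : ℂ) + Complex.I * ((nsq z : ℝ) : ℂ) + Complex.I * (β : ℂ)‖
        ^ (ν / 2) := by
    have hKzt : lamf ((z, t) : Heis n) ^ 2
        = ‖(t : ℂ) + Complex.I * ((nsq z : ℝ) : ℂ) + Complex.I * (β : ℂ)‖ := by
      exact hKT
    rw [← hKzt, ← Real.rpow_natCast (lamf ((z, t) : Heis n)) 2,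
      ← Real.rpow_mul (hlam0 ((z, t) : Heis n)).le]
    congr 1
    push_cast
    ring
  rw [hlnu]
  rw [div_eq_mul_inv, ← Real.rpow_neg (norm_nonneg _), neg_div]
end
end

section
/- For any ξ ∈ ℍⁿ, λ > 0, β ∈ ℝ and any ζ ∈ ℍⁿ ∖ {ξ}, one has d_H(Φ_{ξ,λ}^β(ζ), ξ) · d_H(ζ, ξ) = λ². -/
open Complex Filter Topology MeasureTheory

noncomputable section

open Heis
lemma herm_self_im {n : ℕ} (z : Fin n → ℂ) : (hermInner z z).im = 0 := by
  simp [hermInner, Complex.mul_conj, Complex.im_sum]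

lemma cancel_left {n : ℕ} (ξ x : Heis n) : hmul (hinv ξ) (tau ξ x) = x := by
  have h1 : hermInner (-ξ.1) (ξ.1 + x.1) = -(hermInner ξ.1 ξ.1) - hermInner ξ.1 x.1 := by
    simp only [hermInner, Pi.neg_apply, Pi.add_apply, map_add, neg_mul, mul_add, neg_add,
      Finset.sum_add_distrib, Finset.sum_neg_distrib]
    ring
  simp only [hmul, hinv, tau]
  refine Prod.ext ?_ ?_
  · simp
  · simp only [h1, Complex.sub_im, Complex.neg_im, herm_self_im]
    ring

lemma nsq_nonneg {n : ℕ} (z : Fin n → ℂ) : 0 ≤ nsq z :=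
  Finset.sum_nonneg fun j _ => Complex.normSq_nonneg _

lemma nsq_eq_zero {n : ℕ} {z : Fin n → ℂ} (h : nsq z = 0) : z = 0 := by
  have := (Finset.sum_eq_zero_iff_of_nonneg (fun j _ => Complex.normSq_nonneg (z j))).1 h
  funext j
  exact Complex.normSq_eq_zero.1 (this j (Finset.mem_univ j))

lemma normSq_exp_I_theta (θ : ℝ) :
    Complex.normSq (Complex.exp (Complex.I * (θ : ℂ))) = 1 := by
  have : (Complex.I * (θ : ℂ)).re = 0 := by simp
  rw [Complex.normSq_eq_norm_sq, Complex.norm_exp, this]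
  simp

/-- the reflection identity d_H(Φ_{ξ,λ}^β(ζ),ξ)·d_H(ζ,ξ) = λ². -/
theorem phi_reflection_identity (n : ℕ) (ξ : Heis n) (lam : ℝ) (hlam : 0 < lam) (β : ℝ)
    (ζ : Heis n) (hζ : ζ ≠ ξ) :
    dH (Phi ξ lam β ζ) ξ * dH ζ ξ = lam ^ 2 := by
  set a : Heis n := hmul (hinv ξ) ζ with ha
  set z : Fin n → ℂ := a.1 with hz
  set t : ℝ := a.2 with ht
  set N : ℝ := (nsq z) ^ 2 + t ^ 2 with hN
  -- N > 0
  have haz : a ≠ (0, 0) := by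
    intro h0
    apply hζ
    have h1 : ζ.1 = ξ.1 := by
      have := congrArg Prod.fst h0
      simp only [ha, hmul, hinv] at this
      have : -ξ.1 + ζ.1 = 0 := this
      linear_combination (norm := module) this
    have h2 : ζ.2 = ξ.2 := by
      have := congrArg Prod.snd h0
      simp only [ha, hmul, hinv, h1] at this
      have him : (hermInner (-ξ.1) ξ.1).im = 0 := by
        have : hermInner (-ξ.1) ξ.1 = -(hermInner ξ.1 ξ.1) := by
          simp [hermInner, Finset.sum_neg_distrib]
        rw [this, Complex.neg_im, herm_self_im]
        ring
      rw [him] at this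
      linarith
    exact Prod.ext h1 h2
  have hNpos : 0 < N := by
    rcases lt_or_eq_of_le (by positivity : (0:ℝ) ≤ N) with h | h
    · exact h
    exfalso
    have hz0 : nsq z = 0 := by nlinarith [sq_nonneg (nsq z), sq_nonneg t]
    have ht0 : t = 0 := by nlinarith [sq_nonneg (nsq z), sq_nonneg t]
    exact haz (Prod.ext (nsq_eq_zero hz0) ht0)
  -- identify the w of iota a
  have hnsqconj : nsq (fun j => (starRingEnd ℂ) (z j)) = nsq z := by
    simp [nsq]
  have hw : wC (iota a) = ((-t : ℝ) : ℂ) + Complex.I * ((nsq z : ℝ) : ℂ) := by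
    simp [wC, iota, hnsqconj, ← hz, ← ht]
  have hwnsq : Complex.normSq (wC (iota a)) = N := by
    rw [hw, hN]
    simp [Complex.normSq_apply]
    ring
  have hwne : wC (iota a) ≠ 0 := by
    intro h
    rw [h, map_zero] at hwnsq
    exact absurd hwnsq.symm (ne_of_gt hNpos)
  -- distance of ζ to ξ
  have hd1 : dH ζ ξ = N ^ ((1:ℝ)/4) := rfl
  -- distance of Phi to ξ
  have hd2 : dH (Phi ξ lam β ζ) ξ = (lam ^ 8 / N) ^ ((1:ℝ)/4) := by
    have hc : hmul (hinv ξ) (Phi ξ lam β ζ) =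
        rot (Mmat ξ β) (dil (lam ^ 2) (crInv (iota a))) := cancel_left ξ _
    rw [dH, hc]
    set c : Heis n := dil (lam ^ 2) (crInv (iota a)) with hcdef
    have hrot1 : nsq ((rot (Mmat ξ β) c).1) = nsq c.1 := by
      simp only [rot, Mmat, nsq]
      refine Finset.sum_congr rfl fun j _ => ?_
      rw [Matrix.mulVec_diagonal, map_mul, normSq_exp_I_theta, one_mul]
    have hrot2 : (rot (Mmat ξ β) c).2 = c.2 := rfl
    have hc1 : nsq c.1 = lam ^ 4 * (nsq z / N) := by
      have key : ∀ j, Complex.normSq (((lam ^ 2 : ℝ) : ℂ) * ((iota a).1 j / wC (iota a))) =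
          lam ^ 4 * (Complex.normSq (z j) / N) := by
        intro j
        rw [map_mul, map_div₀, hwnsq, Complex.normSq_ofReal]
        have h2 : Complex.normSq ((iota a).1 j) = Complex.normSq (z j) := by
          simp [iota, ← hz]
        rw [h2]
        ring
      have hstep : nsq c.1 = ∑ j, lam ^ 4 * (Complex.normSq (z j) / N) := by
        simp only [hcdef, dil, crInv, nsq]
        exact Finset.sum_congr rfl fun j _ => key j
      rw [hstep, ← Finset.mul_sum, ← Finset.sum_div]
      rfl
    have hc2 : c.2 = lam ^ 4 * (t / N) := by
      have h0 : c.2 = (lam ^ 2) ^ 2 * (-(iota a).2 / Complex.normSq (wC (iota a))) := rfl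
      have h2 : (iota a).2 = -t := rfl
      rw [h0, hwnsq, h2, neg_neg]
      ring
    rw [korNorm, hrot1, hrot2, hc1, hc2]
    congr 1
    field_simp
    ring
  rw [hd1, hd2, ← Real.mul_rpow (by positivity) (le_of_lt hNpos),
    div_mul_cancel₀ _ (ne_of_gt hNpos)]
  have h8 : (lam : ℝ) ^ 8 = (lam ^ 2) ^ (4:ℕ) := by ring
  rw [h8, ← Real.rpow_natCast (lam ^ 2) 4, ← Real.rpow_mul (by positivity)]
  norm_num
end
end

section
/- Let n ≥ 1 and β, ν ∈ ℝ. Suppose f : ℍⁿ → ℝ is continuous and for every ξ ∈ ℍⁿ there exists λ(ξ) > 0 such that (λ(ξ)/d_H(ξ,ζ))^ν · f(Φ_{ξ,λ(ξ)}^β(ζ)) = f(ζ) for all ζ ∈ ℍⁿ ∖ {ξ}. Then the limit α := lim_{|ζ|_H→∞} |ζ|_H^ν f(ζ) exists, and λ(ξ)^ν f(ξ) = α for every ξ ∈ ℍⁿ. -/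
open Complex Filter Topology MeasureTheory

noncomputable section

section Aux
namespace Heis
variable {n : ℕ}

lemma nsq_nonneg (z : Fin n → ℂ) : 0 ≤ nsq z :=
  Finset.sum_nonneg fun _ _ => Complex.normSq_nonneg _

lemma base_nonneg (a : Heis n) : 0 ≤ (nsq a.1) ^ 2 + a.2 ^ 2 := by positivity

lemma korNorm_nonneg (a : Heis n) : 0 ≤ korNorm a :=
  Real.rpow_nonneg (base_nonneg a) _

lemma wC_re (a : Heis n) : (wC a).re = a.2 := by simp [wC]
lemma wC_im (a : Heis n) : (wC a).im = nsq a.1 := by simp [wC]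

lemma normSq_wC (a : Heis n) : Complex.normSq (wC a) = nsq a.1 ^ 2 + a.2 ^ 2 := by
  rw [Complex.normSq_apply, wC_re, wC_im]; ring

lemma korNorm_eq_sqrt (a : Heis n) : korNorm a = Real.sqrt (‖wC a‖) := by
  rw [Complex.norm_def, normSq_wC, korNorm, Real.sqrt_eq_rpow, Real.sqrt_eq_rpow,
    ← Real.rpow_mul (base_nonneg a)]
  norm_num

lemma abs_wC_eq (a : Heis n) : ‖wC a‖ = korNorm a ^ 2 := by
  rw [korNorm_eq_sqrt, Real.sq_sqrt (norm_nonneg _)]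

lemma nsq_le_abs_wC (a : Heis n) : nsq a.1 ≤ ‖wC a‖ := by
  have := Complex.im_le_norm (wC a)
  rwa [wC_im] at this

lemma abs_snd_le (a : Heis n) : |a.2| ≤ korNorm a ^ 2 := by
  rw [← abs_wC_eq, ← wC_re]
  exact Complex.abs_re_le_norm _

lemma abs_fst_le (a : Heis n) (j : Fin n) : ‖a.1 j‖ ≤ korNorm a := by
  have h1 : Complex.normSq (a.1 j) ≤ nsq a.1 :=
    Finset.single_le_sum (f := fun j => Complex.normSq (a.1 j))
      (fun _ _ => Complex.normSq_nonneg _) (Finset.mem_univ j)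
  have h2 : ‖a.1 j‖ ^ 2 ≤ korNorm a ^ 2 := by
    rw [Complex.sq_norm]
    exact h1.trans ((nsq_le_abs_wC a).trans (abs_wC_eq a).le)
  have h3 := Real.sqrt_le_sqrt h2
  rwa [Real.sqrt_sq (norm_nonneg _), Real.sqrt_sq (korNorm_nonneg _)] at h3

lemma abs_hermInner_le (z w : Fin n → ℂ) :
    ‖hermInner z w‖ ≤ Real.sqrt (nsq z) * Real.sqrt (nsq w) := by
  have h1 : ‖hermInner z w‖ ≤ ∑ j, ‖z j‖ * ‖w j‖ := by
    refine (norm_sum_le _ _).trans (le_of_eq (Finset.sum_congr rfl fun j _ => ?_))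
    rw [norm_mul, Complex.norm_conj]
  refine h1.trans ?_
  have h2 : (∑ j, ‖z j‖ * ‖w j‖) ^ 2 ≤ nsq z * nsq w := by
    have := Finset.sum_mul_sq_le_sq_mul_sq Finset.univ
      (fun j => ‖z j‖) (fun j => ‖w j‖)
    simpa [nsq, Complex.sq_norm] using this
  have h3 := Real.sqrt_le_sqrt h2
  rwa [Real.sqrt_sq (Finset.sum_nonneg fun _ _ => by positivity),
    Real.sqrt_mul (nsq_nonneg z)] at h3

lemma hermInner_conj (z w : Fin n → ℂ) :
    hermInner w z = (starRingEnd ℂ) (hermInner z w) := by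
  rw [hermInner, hermInner, map_sum]
  exact Finset.sum_congr rfl fun j _ => by simp [mul_comm]

lemma hermInner_self_im (z : Fin n → ℂ) : (hermInner z z).im = 0 := by
  rw [hermInner, Complex.im_sum]
  exact Finset.sum_eq_zero fun j _ => by rw [Complex.mul_conj]; simp

lemma nsq_add (z w : Fin n → ℂ) :
    nsq (z + w) = nsq z + nsq w + 2 * (hermInner z w).re := by
  have key : ∀ j, Complex.normSq ((z + w) j) = Complex.normSq (z j) + Complex.normSq (w j)
      + 2 * (z j * (starRingEnd ℂ) (w j)).re := fun j => by
    simp only [Pi.add_apply]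
    rw [Complex.normSq_add]
  simp only [nsq, hermInner, Complex.re_sum, key, Finset.sum_add_distrib, Finset.mul_sum]

lemma wC_hmul (a b : Heis n) :
    wC (hmul a b) = wC a + wC b + 2 * Complex.I * (starRingEnd ℂ) (hermInner a.1 b.1) := by
  apply Complex.ext
  · simp only [Complex.add_re, wC_re, hmul, Complex.mul_re, Complex.mul_im,
      Complex.I_re, Complex.I_im, Complex.conj_re, Complex.conj_im]
    norm_num
  · simp only [Complex.add_im, wC_im, hmul, Complex.mul_re, Complex.mul_im,
      Complex.I_re, Complex.I_im, Complex.conj_re, Complex.conj_im]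
    rw [nsq_add]
    norm_num

lemma korNorm_hmul_le (a b : Heis n) : korNorm (hmul a b) ≤ korNorm a + korNorm b := by
  have hA : 0 ≤ ‖wC a‖ := norm_nonneg _
  have hB : 0 ≤ ‖wC b‖ := norm_nonneg _
  have h1 : ‖wC (hmul a b)‖ ≤
      (Real.sqrt (‖wC a‖) + Real.sqrt (‖wC b‖)) ^ 2 := by
    rw [wC_hmul]
    refine (norm_add_le _ _).trans ?_
    have h2 : ‖2 * Complex.I * (starRingEnd ℂ) (hermInner a.1 b.1)‖ ≤
        2 * (Real.sqrt (nsq a.1) * Real.sqrt (nsq b.1)) := by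
      rw [norm_mul, norm_mul, Complex.norm_two, Complex.norm_I, mul_one, Complex.norm_conj]
      have := abs_hermInner_le a.1 b.1
      linarith
    have h3 : ‖wC a + wC b‖ ≤ ‖wC a‖ + ‖wC b‖ :=
      norm_add_le _ _
    have h4 : Real.sqrt (nsq a.1) ≤ Real.sqrt (‖wC a‖) :=
      Real.sqrt_le_sqrt (nsq_le_abs_wC a)
    have h5 : Real.sqrt (nsq b.1) ≤ Real.sqrt (‖wC b‖) :=
      Real.sqrt_le_sqrt (nsq_le_abs_wC b)
    have hsa : Real.sqrt (‖wC a‖) ^ 2 = ‖wC a‖ := Real.sq_sqrt hA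
    have hsb : Real.sqrt (‖wC b‖) ^ 2 = ‖wC b‖ := Real.sq_sqrt hB
    have hna : 0 ≤ Real.sqrt (nsq a.1) := Real.sqrt_nonneg _
    have hnb : 0 ≤ Real.sqrt (nsq b.1) := Real.sqrt_nonneg _
    nlinarith [Real.sqrt_nonneg (‖wC a‖), Real.sqrt_nonneg (‖wC b‖)]
  rw [korNorm_eq_sqrt, korNorm_eq_sqrt, korNorm_eq_sqrt]
  refine (Real.sqrt_le_sqrt h1).trans_eq ?_
  exact Real.sqrt_sq (by positivity)

lemma korNorm_hinv (a : Heis n) : korNorm (hinv a) = korNorm a := by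
  simp [korNorm, hinv, nsq]

lemma hinv_hmul (a b : Heis n) : hinv (hmul a b) = hmul (hinv b) (hinv a) := by
  have him : (hermInner (-b.1) (-a.1)).im = -(hermInner a.1 b.1).im := by
    have h : hermInner (-b.1) (-a.1) = hermInner b.1 a.1 := by
      rw [hermInner, hermInner]
      exact Finset.sum_congr rfl fun j _ => by simp
    rw [h, hermInner_conj a.1 b.1, Complex.conj_im]
  simp only [hinv, hmul, Prod.mk.injEq]
  constructor
  · ring_nf
  · rw [him]; ring

lemma hmul_hinv_cancel (ξ ζ : Heis n) : hmul ξ (hmul (hinv ξ) ζ) = ζ := by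
  have h1 : hermInner ξ.1 (-ξ.1 + ζ.1) = -hermInner ξ.1 ξ.1 + hermInner ξ.1 ζ.1 := by
    simp only [hermInner, ← Finset.sum_neg_distrib, ← Finset.sum_add_distrib]
    exact Finset.sum_congr rfl fun j _ => by
      simp only [Pi.add_apply, Pi.neg_apply, map_add, map_neg]; ring
  have h2 : (hermInner (-ξ.1) ζ.1).im = -(hermInner ξ.1 ζ.1).im := by
    have : hermInner (-ξ.1) ζ.1 = -hermInner ξ.1 ζ.1 := by
      simp only [hermInner, ← Finset.sum_neg_distrib]
      exact Finset.sum_congr rfl fun j _ => by simp only [Pi.neg_apply]; ring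
    rw [this, Complex.neg_im]
  simp only [hinv, hmul]
  apply Prod.ext
  · simp
  · simp only [h1, h2, Complex.add_im, Complex.neg_im, hermInner_self_im]
    ring

lemma dH_eq (ξ ζ : Heis n) : dH ξ ζ = korNorm (hmul (hinv ξ) ζ) := by
  rw [dH, ← korNorm_hinv (hmul (hinv ξ) ζ), hinv_hmul]
  congr 1
  simp [hinv]

end Heis
end Aux

section Aux2
namespace Heis
variable {n : ℕ}

lemma korNorm_iota (a : Heis n) : korNorm (iota a) = korNorm a := by
  simp [korNorm, iota, nsq, Complex.normSq_conj]

lemma crInv_fst_bound (a : Heis n) (j : Fin n) (h : 0 < korNorm a) :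
    ‖(crInv a).1 j‖ ≤ (korNorm a)⁻¹ := by
  have h1 : ‖(crInv a).1 j‖ = ‖a.1 j‖ / ‖wC a‖ := by
    simp [crInv, norm_div]
  rw [h1, abs_wC_eq]
  calc ‖a.1 j‖ / korNorm a ^ 2 ≤ korNorm a / korNorm a ^ 2 :=
        div_le_div_of_nonneg_right (abs_fst_le a j) (by positivity)
    _ = (korNorm a)⁻¹ := by
        rw [pow_two, div_mul_eq_div_div, div_self h.ne', one_div]

lemma crInv_snd_bound (a : Heis n) (h : 0 < korNorm a) :
    |(crInv a).2| ≤ ((korNorm a) ^ 2)⁻¹ := by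
  have h1 : |(crInv a).2| = |a.2| / Complex.normSq (wC a) := by
    rw [crInv]
    rw [abs_div, abs_neg, _root_.abs_of_nonneg (Complex.normSq_nonneg _)]
  have h2 : Complex.normSq (wC a) = (korNorm a ^ 2) ^ 2 := by
    rw [← Complex.sq_norm, abs_wC_eq]
  rw [h1, h2]
  calc |a.2| / (korNorm a ^ 2) ^ 2 ≤ korNorm a ^ 2 / (korNorm a ^ 2) ^ 2 :=
        div_le_div_of_nonneg_right (abs_snd_le a) (by positivity)
    _ = (korNorm a ^ 2)⁻¹ := by
        rw [pow_two (korNorm a ^ 2), div_mul_eq_div_div, div_self (by positivity), one_div]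

end Heis
end Aux2

open Heis
/-- the limit α = lim_{|ζ|_H→∞} |ζ|_H^ν f(ζ) exists and
λ(ξ)^ν f(ξ) = α for all ξ. -/
theorem limit_exists_and_lambda_identity (n : ℕ) (hn : 1 ≤ n) (β ν : ℝ)
    (f : Heis n → ℝ) (hcont : Continuous f)
    (lam : Heis n → ℝ) (hlam : ∀ ξ, 0 < lam ξ)
    (hsym : ∀ ξ : Heis n, ∀ ζ : Heis n, ζ ≠ ξ →
      (lam ξ / dH ξ ζ) ^ ν * f (Phi ξ (lam ξ) β ζ) = f ζ) :
    ∃ α : ℝ, Tendsto (fun ζ => korNorm ζ ^ ν * f ζ) (atInftyH n) (nhds α) ∧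
      ∀ ξ : Heis n, lam ξ ^ ν * f ξ = α := by
  have hNB : (atInftyH n).NeBot := by
    rw [atInftyH, Filter.comap_neBot_iff]
    intro t ht
    obtain ⟨a, ha⟩ := Filter.mem_atTop_sets.mp ht
    refine ⟨((0 : Fin n → ℂ), (max a 0) ^ 2), ha _ ?_⟩
    have hb : (0:ℝ) ≤ max a 0 := le_max_right a 0
    have hk : korNorm ((0 : Fin n → ℂ), (max a 0) ^ 2) = max a 0 := by
      have h0 : nsq (fun _ : Fin n => (0:ℂ)) = 0 := by simp [nsq]
      show ((nsq (0 : Fin n → ℂ)) ^ 2 + ((max a 0) ^ 2) ^ 2) ^ ((1:ℝ)/4) = max a 0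
      have h0' : nsq (0 : Fin n → ℂ) = 0 := by simp [nsq]
      rw [h0']
      have h4 : (0:ℝ) ^ 2 + ((max a 0) ^ 2) ^ 2 = (max a 0) ^ (4:ℕ) := by ring
      rw [h4, ← Real.rpow_natCast (max a 0) 4, ← Real.rpow_mul hb]
      norm_num
    rw [hk]
    exact le_max_left a 0
  haveI := hNB
  have key : ∀ ξ : Heis n, Tendsto (fun ζ => korNorm ζ ^ ν * f ζ) (atInftyH n)
      (𝓝 (lam ξ ^ ν * f ξ)) := by
    intro ξ
    have hkor : Tendsto korNorm (atInftyH n) atTop := tendsto_comap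
    set G : Heis n → Heis n := fun ζ => hmul (hinv ξ) ζ with hGdef
    have hle1 : ∀ ζ, korNorm ζ ≤ korNorm ξ + korNorm (G ζ) := fun ζ => by
      conv_lhs => rw [← hmul_hinv_cancel ξ ζ]
      exact korNorm_hmul_le _ _
    have hle2 : ∀ ζ, korNorm (G ζ) ≤ korNorm ξ + korNorm ζ := fun ζ => by
      have h := korNorm_hmul_le (hinv ξ) ζ
      rwa [korNorm_hinv] at h
    have hGten : Tendsto (fun ζ => korNorm (G ζ)) (atInftyH n) atTop := by
      refine tendsto_atTop_mono (fun ζ => ?_)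
        (tendsto_atTop_add_const_right _ (-(korNorm ξ)) hkor)
      linarith [hle1 ζ]
    have hdiv0 : Tendsto (fun ζ => (korNorm ζ - korNorm (G ζ)) / korNorm (G ζ))
        (atInftyH n) (𝓝 0) := by
      apply squeeze_zero_norm' (a := fun ζ => korNorm ξ / korNorm (G ζ))
      · filter_upwards [hGten.eventually (eventually_gt_atTop 0)] with ζ hpos
        rw [Real.norm_eq_abs, abs_div, abs_of_pos hpos]
        have habs : |korNorm ζ - korNorm (G ζ)| ≤ korNorm ξ :=
          abs_le.mpr ⟨by linarith [hle2 ζ], by linarith [hle1 ζ]⟩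
        gcongr
      · exact tendsto_const_nhds.div_atTop hGten
    have hratio : Tendsto (fun ζ => korNorm ζ / korNorm (G ζ)) (atInftyH n) (𝓝 1) := by
      have h1 : Tendsto (fun ζ => 1 + (korNorm ζ - korNorm (G ζ)) / korNorm (G ζ))
          (atInftyH n) (𝓝 (1 + 0)) := tendsto_const_nhds.add hdiv0
      rw [add_zero] at h1
      refine Tendsto.congr' ?_ h1
      filter_upwards [hGten.eventually (eventually_gt_atTop 0)] with ζ hpos
      field_simp
      ring
    have hPhiten : Tendsto (Phi ξ (lam ξ) β) (atInftyH n) (𝓝 ξ) := by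
      have hmv : Continuous fun a : Heis n =>
          (Mmat ξ β).mulVec (fun j => ((lam ξ ^ 2 : ℝ) : ℂ) * a.1 j) :=
        Continuous.matrix_mulVec continuous_const
          (continuous_pi fun j => continuous_const.mul ((continuous_apply j).comp continuous_fst))
      have hc : Continuous (fun a : Heis n => tau ξ (rot (Mmat ξ β) (dil (lam ξ ^ 2) a))) := by
        simp only [tau, rot, dil, hmul, hermInner]
        refine Continuous.prodMk (continuous_const.add hmv) ?_
        refine Continuous.add
          (Continuous.add continuous_const (continuous_const.mul continuous_snd)) ?_
        refine Continuous.mul continuous_const ?_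
        refine Complex.continuous_im.comp ?_
        refine continuous_finset_sum _ fun k _ => ?_
        exact Continuous.mul continuous_const
          (Complex.continuous_conj.comp ((continuous_apply k).comp hmv))
      have hc0 : tau ξ (rot (Mmat ξ β) (dil (lam ξ ^ 2) (0 : Heis n))) = ξ := by
        simp [tau, rot, dil, hmul, hermInner, Prod.ext_iff,
          show (fun _ : Fin n => (0:ℂ)) = (0 : Fin n → ℂ) from rfl, Matrix.mulVec_zero]
      have hF : Tendsto (fun ζ => (crInv (iota (G ζ))).1) (atInftyH n)
          (𝓝 (0 : Fin n → ℂ)) := by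
        rw [tendsto_pi_nhds]
        intro j
        apply squeeze_zero_norm' (a := fun ζ => (korNorm (G ζ))⁻¹)
        · filter_upwards [hGten.eventually (eventually_gt_atTop 0)] with ζ hpos
          have hK : korNorm (iota (G ζ)) = korNorm (G ζ) := korNorm_iota _
          have := crInv_fst_bound (iota (G ζ)) j (by rw [hK]; exact hpos)
          rw [hK] at this
          simpa using this
        · exact hGten.inv_tendsto_atTop
      have hS : Tendsto (fun ζ => (crInv (iota (G ζ))).2) (atInftyH n) (𝓝 (0 : ℝ)) := by
        apply squeeze_zero_norm' (a := fun ζ => (korNorm (G ζ))⁻¹)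
        · filter_upwards [hGten.eventually (eventually_ge_atTop 1)] with ζ h1
          have hpos : (0:ℝ) < korNorm (G ζ) := lt_of_lt_of_le one_pos h1
          have hK : korNorm (iota (G ζ)) = korNorm (G ζ) := korNorm_iota _
          have hb := crInv_snd_bound (iota (G ζ)) (by rw [hK]; exact hpos)
          rw [hK] at hb
          have h2 : ((korNorm (G ζ)) ^ 2)⁻¹ ≤ (korNorm (G ζ))⁻¹ := by
            apply inv_anti₀ hpos
            nlinarith
          rw [Real.norm_eq_abs]
          exact hb.trans h2
        · exact hGten.inv_tendsto_atTop
      have hinner : Tendsto (fun ζ => crInv (iota (G ζ))) (atInftyH n)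
          (𝓝 (0 : Heis n)) := hF.prodMk_nhds hS
      have hcomp := (hc.tendsto 0).comp hinner
      rw [hc0] at hcomp
      exact hcomp
    have hfΦ : Tendsto (fun ζ => f (Phi ξ (lam ξ) β ζ)) (atInftyH n) (𝓝 (f ξ)) :=
      (hcont.tendsto ξ).comp hPhiten
    have hbase : Tendsto (fun ζ => lam ξ * (korNorm ζ / korNorm (G ζ))) (atInftyH n)
        (𝓝 (lam ξ)) := by
      have h := hratio.const_mul (lam ξ)
      rwa [mul_one] at h
    have hpow : Tendsto (fun ζ => (lam ξ * (korNorm ζ / korNorm (G ζ))) ^ ν) (atInftyH n)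
        (𝓝 (lam ξ ^ ν)) := hbase.rpow_const (Or.inl (hlam ξ).ne')
    have hmain := hpow.mul hfΦ
    refine Tendsto.congr' ?_ hmain
    filter_upwards [hkor.eventually (eventually_gt_atTop (korNorm ξ))] with ζ hgt
    have hne : ζ ≠ ξ := fun h => by rw [h] at hgt; exact lt_irrefl _ hgt
    have hdpos : 0 < korNorm (G ζ) := by linarith [hle1 ζ]
    have hs := hsym ξ ζ hne
    rw [dH_eq ξ ζ] at hs
    rw [← hs]
    have hrw : lam ξ * (korNorm ζ / korNorm (G ζ)) = korNorm ζ * (lam ξ / korNorm (G ζ)) := by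
      ring
    rw [hrw, Real.mul_rpow (korNorm_nonneg ζ) (div_nonneg (hlam ξ).le hdpos.le)]
    ring
  exact ⟨lam 0 ^ ν * f 0, key 0, fun ξ => tendsto_nhds_unique (key ξ) (key 0)⟩
end
end
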